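/- arXiv:1505.05385 — 4 statements merged into one kernel-verified Lean document; each statement's English description precedes it below -/
import Mathlib

section
/- (Breiman's lemma) Let σ ≥ 0 be a random variable with P(σ > x) ~ c₀ x^{−α} as x → ∞ for some c₀ > 0 and α > 0, and let Z be a random variable independent of σ with E[(Z⁺)^{α+ε}] < ∞ for some ε > 0 and P(Z > 0) > 0. Then P(σ Z > x) / P(σ > x) → E[(Z⁺)^α] as x → ∞. -/
open MeasureTheory ProbabilityTheory Filter

/-- Breiman's lemma: if `P(σ > x) ~ c₀ x^(−α)` as `x → ∞`, `Z` is independent of `σ`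
with `E[(Z⁺)^(α+ε)] < ∞` for some `ε > 0` and `P(Z > 0) > 0`, then
`P(σZ > x)/P(σ > x) → E[(Z⁺)^α]`. -/
theorem stmt4 {Ω : Type*} [MeasurableSpace Ω] (μ : Measure Ω) [IsProbabilityMeasure μ]
    (σ Z : Ω → ℝ) (hσmeas : Measurable σ) (hZmeas : Measurable Z)
    (hσnonneg : ∀ ω, 0 ≤ σ ω)
    (hindep : IndepFun σ Z μ)
    (c₀ α : ℝ) (hc₀ : 0 < c₀) (hα : 0 < α)
    (htail : Tendsto (fun x : ℝ =>
      (μ {ω | σ ω > x}).toReal / (c₀ * x ^ (-α))) atTop (nhds 1))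
    (ε : ℝ) (hε : 0 < ε)
    (hmom : Integrable (fun ω => (max (Z ω) 0) ^ (α + ε)) μ)
    (hZpos : 0 < (μ {ω | 0 < Z ω}).toReal) :
    Tendsto (fun x : ℝ =>
        (μ {ω | σ ω * Z ω > x}).toReal / (μ {ω | σ ω > x}).toReal)
      atTop (nhds (∫ ω, (max (Z ω) 0) ^ α ∂μ)) := by
  classical
  have hZae : AEMeasurable Z μ := hZmeas.aemeasurable
  have hσae : AEMeasurable σ μ := hσmeas.aemeasurable
  set ν : Measure ℝ := μ.map Z with hνdef
  haveI hνprob : IsProbabilityMeasure ν := Measure.isProbabilityMeasure_map hZae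
  -- tail function
  set g : ℝ → ℝ := fun y => (μ {ω | σ ω > y}).toReal with hgdef
  have hganti : Antitone g := by
    intro y₁ y₂ h
    exact ENNReal.toReal_mono (measure_ne_top μ _)
      (measure_mono (fun ω hω => lt_of_le_of_lt h hω))
  have hgmeas : Measurable g := hganti.measurable
  have hgnonneg : ∀ y, 0 ≤ g y := fun y => ENNReal.toReal_nonneg
  have hgle1 : ∀ y, g y ≤ 1 := by
    intro y
    have := prob_le_one (μ := μ) (s := {ω | σ ω > y})
    simpa [hgdef] using ENNReal.toReal_mono (by simp) this
  set r : ℝ → ℝ := fun x => c₀ * x ^ (-α) with hrdef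
  have hrpos : ∀ x : ℝ, 0 < x → 0 < r x := fun x hx =>
    mul_pos hc₀ (Real.rpow_pos_of_pos hx _)
  -- key scaling identity for r
  have hrscale : ∀ x z : ℝ, 0 < x → 0 < z → r (x / z) = r x * z ^ α := by
    intro x z hx hz
    simp only [hrdef]
    rw [Real.div_rpow hx.le hz.le, Real.rpow_neg hz.le, div_eq_mul_inv, inv_inv, ← mul_assoc]
  -- Step 1: product formula
  have hmul_set : ∀ x : ℝ, 0 < x →
      μ {ω | σ ω * Z ω > x} = ∫⁻ z in Set.Ioi (0:ℝ), μ {ω | σ ω > x / z} ∂ν := by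
    intro x hx
    have hset : MeasurableSet {p : ℝ × ℝ | p.1 * p.2 > x} :=
      measurableSet_lt measurable_const (measurable_fst.mul measurable_snd)
    have hpair : Measurable fun ω => (σ ω, Z ω) := hσmeas.prodMk hZmeas
    have h1 : μ {ω | σ ω * Z ω > x}
        = (μ.map fun ω => (σ ω, Z ω)) {p : ℝ × ℝ | p.1 * p.2 > x} := by
      rw [Measure.map_apply hpair hset]; rfl
    rw [h1, (indepFun_iff_map_prod_eq_prod_map_map hσae hZae).1 hindep,
      Measure.prod_apply_symm hset]
    have h2 : ∀ z : ℝ, (μ.map σ) ((fun s => (s, z)) ⁻¹' {p : ℝ × ℝ | p.1 * p.2 > x})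
        = Set.indicator (Set.Ioi 0) (fun z => μ {ω | σ ω > x / z}) z := by
      intro z
      rcases le_or_gt z 0 with hz | hz
      · rw [Set.indicator_of_notMem (by simpa using hz)]
        have hsub : ((fun s => (s, z)) ⁻¹' {p : ℝ × ℝ | p.1 * p.2 > x}) ⊆ Set.Iio 0 := by
          intro s hs
          simp only [Set.mem_preimage, Set.mem_setOf_eq] at hs
          by_contra h
          simp only [Set.mem_Iio, not_lt] at h
          have : s * z ≤ 0 := mul_nonpos_iff.2 (Or.inl ⟨h, hz⟩)
          linarith
        refine measure_mono_null hsub ?_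
        rw [Measure.map_apply hσmeas measurableSet_Iio]
        have : σ ⁻¹' Set.Iio 0 = ∅ := by
          ext ω; simp [not_lt.2 (hσnonneg ω)]
        simp [this]
      · rw [Set.indicator_of_mem (Set.mem_Ioi.2 hz)]
        have hpre : ((fun s => (s, z)) ⁻¹' {p : ℝ × ℝ | p.1 * p.2 > x}) = Set.Ioi (x / z) := by
          ext s
          simp only [Set.mem_preimage, Set.mem_setOf_eq, Set.mem_Ioi, gt_iff_lt]
          rw [div_lt_iff₀ hz]
        rw [hpre, Measure.map_apply hσmeas measurableSet_Ioi]
        rfl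
    rw [lintegral_congr h2, lintegral_indicator measurableSet_Ioi _]
  -- measurability of the ENNReal tail
  have hGanti : Antitone (fun y : ℝ => μ {ω | σ ω > y}) := fun y₁ y₂ h =>
    measure_mono (fun ω hω => lt_of_le_of_lt h hω)
  have hGmeas : Measurable (fun y : ℝ => μ {ω | σ ω > y}) := hGanti.measurable
  -- Step 2: toReal version
  have hkey : ∀ x : ℝ, 0 < x →
      (μ {ω | σ ω * Z ω > x}).toReal = ∫ z in Set.Ioi (0:ℝ), g (x / z) ∂ν := by
    intro x hx
    rw [hmul_set x hx, ← integral_toReal]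
    · exact ((hGmeas.comp (measurable_const.div measurable_id)).aemeasurable)
    · exact Filter.Eventually.of_forall fun z => measure_lt_top μ _
  -- extract x₀ with tail bound
  have hev : ∀ᶠ y in atTop, g y / r y ≤ 2 :=
    htail.eventually_le_const (by norm_num)
  obtain ⟨x₀, hx₀⟩ := (hev.and (eventually_ge_atTop (1 : ℝ))).exists_forall_of_atTop
  have hx₀1 : 1 ≤ x₀ := (hx₀ x₀ le_rfl).2
  have hx₀pos : 0 < x₀ := lt_of_lt_of_le one_pos hx₀1
  have htb : ∀ y : ℝ, x₀ ≤ y → g y ≤ 2 * r y := by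
    intro y hy
    have hypos : 0 < y := lt_of_lt_of_le hx₀pos hy
    exact (div_le_iff₀ (hrpos y hypos)).1 (hx₀ y hy).1
  set K : ℝ := 2 + x₀ ^ α / c₀ with hKdef
  have hK2 : (2:ℝ) ≤ K := by
    have : 0 ≤ x₀ ^ α / c₀ := div_nonneg (Real.rpow_nonneg hx₀pos.le _) hc₀.le
    rw [hKdef]; linarith
  have hKge : x₀ ^ α / c₀ ≤ K := by rw [hKdef]; linarith
  set bound : ℝ → ℝ := fun z => K * (z ^ (α + ε) + 1) with hbdef
  -- integrability of the bound
  have hmax_meas : ∀ c : ℝ, 0 ≤ c → Measurable fun z : ℝ => (max z 0) ^ c := by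
    intro c hc
    exact ((Real.continuous_rpow_const hc).comp (continuous_id.max continuous_const)).measurable
  have hint1 : Integrable (fun z => (max z 0) ^ (α + ε)) ν := by
    rw [hνdef, integrable_map_measure ((hmax_meas _ (by linarith)).aestronglyMeasurable) hZae]
    exact hmom
  have hint2 : Integrable (fun z => z ^ (α + ε)) (ν.restrict (Set.Ioi 0)) := by
    refine (hint1.restrict (s := Set.Ioi 0)).congr ?_
    filter_upwards [ae_restrict_mem measurableSet_Ioi] with z hz
    rw [max_eq_left (le_of_lt hz)]
  have hbound_int : Integrable bound (ν.restrict (Set.Ioi 0)) :=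
    ((hint2.add (integrable_const 1)).const_mul K)
  -- pointwise bound z^α ≤ z^(α+ε) + 1 for z > 0
  have hzpow : ∀ z : ℝ, 0 < z → z ^ α ≤ z ^ (α + ε) + 1 := by
    intro z hz
    rcases le_or_gt 1 z with h1 | h1
    · have := Real.rpow_le_rpow_of_exponent_le h1 (by linarith : α ≤ α + ε)
      have h0 : (0:ℝ) ≤ z ^ (α + ε) := Real.rpow_nonneg hz.le _
      linarith
    · have := Real.rpow_le_one hz.le h1.le hα.le
      have h0 : (0:ℝ) ≤ z ^ (α + ε) := Real.rpow_nonneg hz.le _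
      linarith
  -- Step 3: dominated convergence
  have hDCT : Tendsto (fun x : ℝ => ∫ z in Set.Ioi (0:ℝ), g (x / z) / r x ∂ν) atTop
      (nhds (∫ z in Set.Ioi (0:ℝ), z ^ α ∂ν)) := by
    refine tendsto_integral_filter_of_dominated_convergence bound ?_ ?_ hbound_int ?_
    · exact Filter.Eventually.of_forall fun x =>
        (((hgmeas.comp (measurable_const.div measurable_id)).div
          measurable_const).aestronglyMeasurable)
    · filter_upwards [eventually_ge_atTop x₀] with x hx
      rw [ae_restrict_iff' measurableSet_Ioi]
      refine Filter.Eventually.of_forall fun z hz => ?_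
      have hzpos : (0:ℝ) < z := hz
      have hxpos : 0 < x := lt_of_lt_of_le hx₀pos hx
      have hrx : 0 < r x := hrpos x hxpos
      have hnn : 0 ≤ g (x / z) / r x := div_nonneg (hgnonneg _) hrx.le
      rw [Real.norm_of_nonneg hnn]
      have hbz : 0 ≤ z ^ (α + ε) + 1 := by
        have := Real.rpow_nonneg hzpos.le (α + ε); linarith
      rcases le_or_gt z (x / x₀) with hcase | hcase
      · -- x / z ≥ x₀
        have hxz : x₀ ≤ x / z := by
          rw [le_div_iff₀ hzpos]
          calc x₀ * z ≤ x₀ * (x / x₀) := by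
                exact mul_le_mul_of_nonneg_left hcase hx₀pos.le
            _ = x := by field_simp
        have h1 : g (x / z) ≤ 2 * r (x / z) := htb _ hxz
        have h2 : r (x / z) = r x * z ^ α := hrscale x z hxpos hzpos
        have h3 : g (x / z) / r x ≤ 2 * z ^ α := by
          rw [div_le_iff₀ hrx]
          calc g (x / z) ≤ 2 * (r x * z ^ α) := by rw [← h2]; exact h1
            _ = 2 * z ^ α * r x := by ring
        calc g (x / z) / r x ≤ 2 * z ^ α := h3
          _ ≤ 2 * (z ^ (α + ε) + 1) := by
              have := hzpow z hzpos
              nlinarith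
          _ ≤ K * (z ^ (α + ε) + 1) := mul_le_mul_of_nonneg_right hK2 hbz
      · -- z > x / x₀, so z ≥ 1 and g ≤ 1
        have hz1 : 1 ≤ z := by
          have : (1:ℝ) ≤ x / x₀ := (one_le_div hx₀pos).2 hx
          linarith
        have hxlt : x < x₀ * z := by
          rw [div_lt_iff₀ hx₀pos] at hcase
          linarith [hcase]
        have h1 : g (x / z) / r x ≤ x ^ α / c₀ := by
          have hrxeq : r x = c₀ / x ^ α := by
            simp only [hrdef]
            rw [Real.rpow_neg hxpos.le, div_eq_mul_inv]
          rw [hrxeq, div_div_eq_mul_div]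
          apply (div_le_div_iff_of_pos_right hc₀).2
          nlinarith [hgle1 (x / z), Real.rpow_nonneg hxpos.le α,
            Real.rpow_pos_of_pos hxpos α]
        have h2 : x ^ α ≤ x₀ ^ α * z ^ α := by
          calc x ^ α ≤ (x₀ * z) ^ α :=
                Real.rpow_le_rpow hxpos.le hxlt.le hα.le
            _ = x₀ ^ α * z ^ α := Real.mul_rpow hx₀pos.le hzpos.le
        have h3 : z ^ α ≤ z ^ (α + ε) :=
          Real.rpow_le_rpow_of_exponent_le hz1 (by linarith)
        have h4 : (0:ℝ) ≤ z ^ (α + ε) := Real.rpow_nonneg hzpos.le _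
        have h5 : (0:ℝ) ≤ x₀ ^ α := Real.rpow_nonneg hx₀pos.le _
        calc g (x / z) / r x ≤ x ^ α / c₀ := h1
          _ ≤ (x₀ ^ α / c₀) * z ^ (α + ε) := by
              rw [div_mul_eq_mul_div]
              apply (div_le_div_iff_of_pos_right hc₀).2
              nlinarith [mul_le_mul_of_nonneg_left h3 h5]
          _ ≤ K * (z ^ (α + ε) + 1) := by
              calc (x₀ ^ α / c₀) * z ^ (α + ε) ≤ K * z ^ (α + ε) :=
                    mul_le_mul_of_nonneg_right hKge h4
                _ ≤ K * (z ^ (α + ε) + 1) :=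
                    mul_le_mul_of_nonneg_left (by linarith) (by linarith)
    · -- pointwise convergence
      rw [ae_restrict_iff' measurableSet_Ioi]
      refine Filter.Eventually.of_forall fun z hz => ?_
      have hzpos : (0:ℝ) < z := hz
      have hzα : (0:ℝ) < z ^ α := Real.rpow_pos_of_pos hzpos α
      have h1 : Tendsto (fun x : ℝ => x / z) atTop atTop :=
        Tendsto.atTop_div_const hzpos tendsto_id
      have h2 : Tendsto (fun x : ℝ => g (x / z) / r (x / z)) atTop (nhds 1) := htail.comp h1
      have h3 : Tendsto (fun x : ℝ => g (x / z) / r (x / z) * z ^ α) atTop (nhds (z ^ α)) := by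
        simpa using h2.mul_const (z ^ α)
      refine h3.congr' ?_
      filter_upwards [eventually_gt_atTop 0] with x hxpos
      rw [hrscale x z hxpos hzpos, ← div_div, div_mul_cancel₀ _ hzα.ne']
  -- limit value identification
  have hL : ∫ z in Set.Ioi (0:ℝ), z ^ α ∂ν = ∫ ω, (max (Z ω) 0) ^ α ∂μ := by
    have e1 : ∫ z in Set.Ioi (0:ℝ), z ^ α ∂ν
        = ∫ z in Set.Ioi (0:ℝ), (max z 0) ^ α ∂ν := by
      refine setIntegral_congr_fun measurableSet_Ioi fun z hz => ?_
      rw [max_eq_left (le_of_lt hz)]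
    have e2 : ∀ z ∉ Set.Ioi (0:ℝ), (max z 0) ^ α = 0 := by
      intro z hz
      simp only [Set.mem_Ioi, not_lt] at hz
      rw [max_eq_right hz, Real.zero_rpow (ne_of_gt hα)]
    rw [e1, setIntegral_eq_integral_of_forall_compl_eq_zero e2, hνdef,
      integral_map hZae ((hmax_meas α hα.le).aestronglyMeasurable)]
  -- numerator over r tends to the limit
  have hAr : Tendsto (fun x : ℝ => (∫ z in Set.Ioi (0:ℝ), g (x / z) ∂ν) / r x) atTop
      (nhds (∫ ω, (max (Z ω) 0) ^ α ∂μ)) := by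
    rw [← hL]
    refine hDCT.congr fun x => ?_
    rw [integral_div]
  -- r / g tends to 1
  have hrg : Tendsto (fun x : ℝ => r x / g x) atTop (nhds 1) := by
    have h := htail.inv₀ one_ne_zero
    simp only [inv_one] at h
    refine h.congr fun x => ?_
    rw [inv_div]
  have hfinal : Tendsto (fun x : ℝ =>
      ((∫ z in Set.Ioi (0:ℝ), g (x / z) ∂ν) / r x) * (r x / g x)) atTop
      (nhds (∫ ω, (max (Z ω) 0) ^ α ∂μ)) := by
    simpa using hAr.mul hrg
  refine hfinal.congr' ?_
  filter_upwards [eventually_gt_atTop 0] with x hxpos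
  rw [div_mul_div_comm, mul_comm (∫ z in Set.Ioi (0:ℝ), g (x / z) ∂ν) (r x),
    mul_div_mul_left _ _ (hrpos x hxpos).ne', ← hkey x hxpos]
end

section
/- Let σ ≥ 0 satisfy P(σ > x) ~ c₀ x^{−α} as x → ∞ with c₀ > 0, α > 0, and let Z be independent of σ with E[|Z|^{α+ε}] < ∞ for some ε > 0, P(Z > 0) > 0 and P(Z < 0) > 0. Then P(σZ > x) ~ E[(Z⁺)^α] P(σ > x) and P(σZ ≤ −x) ~ E[(Z⁻)^α] P(σ > x) as x → ∞, where Z⁻ = max(−Z, 0). -/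
open MeasureTheory ProbabilityTheory Filter
open Set

lemma shift_ratio {c₀ α : ℝ} (hc₀ : 0 < c₀) (hα : 0 < α) {F : ℝ → ℝ}
    (hF : Tendsto (fun x => F x / (c₀ * x ^ (-α))) atTop (nhds 1)) :
    Tendsto (fun x => F (x - 1) / (c₀ * x ^ (-α))) atTop (nhds 1) := by
  have h1 : Tendsto (fun x : ℝ => F (x - 1) / (c₀ * (x - 1) ^ (-α))) atTop (nhds 1) :=
    hF.comp (tendsto_atTop_add_const_right _ (-1) tendsto_id)
  have hb : Tendsto (fun x : ℝ => (x - 1) / x) atTop (nhds 1) := by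
    have h0 : Tendsto (fun x : ℝ => 1 - x⁻¹) atTop (nhds 1) := by
      simpa using (tendsto_const_nhds : Tendsto (fun _ : ℝ => (1:ℝ)) atTop (nhds 1)).sub tendsto_inv_atTop_zero
    refine h0.congr' ?_
    filter_upwards [eventually_ne_atTop 0] with x hx
    field_simp
  have h2 : Tendsto (fun x : ℝ => ((x - 1) / x) ^ (-α)) atTop (nhds 1) := by
    have := (Real.continuousAt_rpow_const 1 (-α) (Or.inl one_ne_zero)).tendsto.comp hb
    simpa [Function.comp_def] using this
  have h3 := h1.mul h2
  rw [mul_one] at h3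
  refine h3.congr' ?_
  filter_upwards [eventually_gt_atTop 1] with x hx
  have hx0 : (0:ℝ) < x := by linarith
  have hx1 : (0:ℝ) < x - 1 := by linarith
  rw [Real.div_rpow hx1.le hx0.le]
  have e1 : (0:ℝ) < (x-1) ^ (-α) := Real.rpow_pos_of_pos hx1 _
  have e2 : (0:ℝ) < x ^ (-α) := Real.rpow_pos_of_pos hx0 _
  field_simp

lemma evpos {c₀ α : ℝ} (hc₀ : 0 < c₀) {F : ℝ → ℝ}
    (hF : Tendsto (fun x => F x / (c₀ * x ^ (-α))) atTop (nhds 1)) :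
    ∀ᶠ x in atTop, 0 < F x := by
  filter_upwards [hF.eventually (lt_mem_nhds (by norm_num : (1:ℝ)/2 < 1)),
    eventually_gt_atTop 0] with x hx hx0
  have hd : 0 < c₀ * x ^ (-α) := by positivity
  by_contra h
  push_neg at h
  have : F x / (c₀ * x ^ (-α)) ≤ 0 := div_nonpos_of_nonpos_of_nonneg h hd.le
  linarith

lemma ici_tail (ν : Measure ℝ) [IsProbabilityMeasure ν] {c₀ α : ℝ} (hc₀ : 0 < c₀) (hα : 0 < α)
    (htail : Tendsto (fun x => (ν (Ioi x)).toReal / (c₀ * x ^ (-α))) atTop (nhds 1)) :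
    Tendsto (fun x => (ν (Ici x)).toReal / (c₀ * x ^ (-α))) atTop (nhds 1) := by
  refine tendsto_of_tendsto_of_tendsto_of_le_of_le' htail (shift_ratio hc₀ hα htail) ?_ ?_
  · filter_upwards [eventually_gt_atTop 0] with x hx
    have hd : (0:ℝ) < c₀ * x ^ (-α) := by positivity
    gcongr
    · exact measure_ne_top _ _
    · exact Ioi_subset_Ici le_rfl
  · filter_upwards [eventually_gt_atTop 0] with x hx
    have hd : (0:ℝ) < c₀ * x ^ (-α) := by positivity
    gcongr
    · exact measure_ne_top _ _
    · linarith

lemma ratio_lemma {c₀ α : ℝ} (hc₀ : 0 < c₀) (hα : 0 < α) {G F : ℝ → ℝ}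
    (hG : Tendsto (fun x => G x / (c₀ * x ^ (-α))) atTop (nhds 1))
    (hF : Tendsto (fun x => F x / (c₀ * x ^ (-α))) atTop (nhds 1))
    {w : ℝ} (hw : 0 < w) :
    Tendsto (fun x => G (x / w) / F x) atTop (nhds (w ^ α)) := by
  have h1 : Tendsto (fun x : ℝ => G (x / w) / (c₀ * (x / w) ^ (-α))) atTop (nhds 1) :=
    hG.comp (tendsto_id.atTop_div_const hw)
  have h3 : Tendsto (fun x : ℝ => (F x / (c₀ * x ^ (-α)))⁻¹) atTop (nhds 1) := by
    simpa using hF.inv₀ one_ne_zero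
  have h := (h1.mul h3).mul (tendsto_const_nhds : Tendsto (fun _ : ℝ => w ^ α) atTop _)
  rw [one_mul, one_mul] at h
  refine h.congr' ?_
  filter_upwards [evpos hc₀ hF, eventually_gt_atTop 0] with x hFx hx0
  have hxw : (0:ℝ) < x / w := div_pos hx0 hw
  have e0 : (x / w) ^ (-α) = x ^ (-α) * w ^ α := by
    rw [Real.div_rpow hx0.le hw.le, Real.rpow_neg hw.le]
    field_simp
  have e1 : (0:ℝ) < x ^ (-α) := Real.rpow_pos_of_pos hx0 _
  have e2 : (0:ℝ) < w ^ α := Real.rpow_pos_of_pos hw _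
  rw [e0]
  field_simp

lemma domination (ν : Measure ℝ) [IsProbabilityMeasure ν] {c₀ α ε : ℝ}
    (hc₀ : 0 < c₀) (hα : 0 < α) (hε : 0 < ε)
    (htail : Tendsto (fun x => (ν (Ioi x)).toReal / (c₀ * x ^ (-α))) atTop (nhds 1)) :
    ∃ C : ℝ, 0 < C ∧ ∀ᶠ x in atTop, ∀ w : ℝ, 0 < w →
      (ν (Ici (x / w))).toReal ≤ C * (1 + w ^ (α + ε)) * (ν (Ioi x)).toReal := by
  have hev : ∀ᶠ t in atTop, (1:ℝ)/2 * (c₀ * t ^ (-α)) ≤ (ν (Ioi t)).toReal ∧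
      (ν (Ioi t)).toReal ≤ 2 * (c₀ * t ^ (-α)) := by
    filter_upwards [htail.eventually (Ioo_mem_nhds (by norm_num : (1:ℝ)/2 < 1)
      (by norm_num : (1:ℝ) < 2)), eventually_gt_atTop 0] with t ht ht0
    have hd : (0:ℝ) < c₀ * t ^ (-α) := by positivity
    constructor
    · linarith [(lt_div_iff₀ hd).mp ht.1]
    · linarith [(div_lt_iff₀ hd).mp ht.2]
  obtain ⟨x₀, hx₀⟩ := (hev.and (eventually_ge_atTop 1)).exists_forall_of_atTop
  have hx₀1 : (1:ℝ) ≤ x₀ := (hx₀ x₀ le_rfl).2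
  set C : ℝ := max (2 ^ (α + 2)) (2 / c₀ * (2 * x₀) ^ α) with hC
  have hCpos : 0 < C := lt_of_lt_of_le (by positivity) (le_max_left _ _)
  refine ⟨C, hCpos, ?_⟩
  filter_upwards [eventually_ge_atTop x₀] with x hx w hw
  have hx0 : (0:ℝ) < x := lt_of_lt_of_le (by linarith) hx
  have hxw : (0:ℝ) < x / w := div_pos hx0 hw
  have hFx : (1:ℝ)/2 * (c₀ * x ^ (-α)) ≤ (ν (Ioi x)).toReal := (hx₀ x hx).1.1
  have hFnonneg : (0:ℝ) ≤ (ν (Ioi x)).toReal := ENNReal.toReal_nonneg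
  have hwα : (0:ℝ) < w ^ α := Real.rpow_pos_of_pos hw _
  have key : (ν (Ici (x / w))).toReal ≤ C * w ^ α * (ν (Ioi x)).toReal := by
    rcases le_or_gt x₀ (x / (2 * w)) with hcase | hcase
    · -- x/(2w) ≥ x₀
      have hsub : Ici (x / w) ⊆ Ioi (x / (2 * w)) := by
        intro s hs
        have : x / (2 * w) < x / w := by
          apply div_lt_div_of_pos_left hx0 (by positivity); linarith
        exact lt_of_lt_of_le this hs
      have h1 : (ν (Ici (x / w))).toReal ≤ (ν (Ioi (x / (2 * w)))).toReal := by
        exact ENNReal.toReal_mono (measure_ne_top _ _) (measure_mono hsub)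
      have h2 : (ν (Ioi (x / (2 * w)))).toReal ≤ 2 * (c₀ * (x / (2 * w)) ^ (-α)) :=
        (hx₀ _ hcase).1.2
      have e0 : (x / (2 * w)) ^ (-α) = x ^ (-α) * (2 * w) ^ α := by
        rw [Real.div_rpow hx0.le (by positivity),
          Real.rpow_neg (by positivity : (0:ℝ) ≤ 2 * w), div_inv_eq_mul]
      have e1 : (2 * w) ^ α = 2 ^ α * w ^ α := Real.mul_rpow (by norm_num) hw.le
      have h4 : c₀ * x ^ (-α) ≤ 2 * (ν (Ioi x)).toReal := by linarith
      have h2' : (ν (Ioi (x / (2 * w)))).toReal ≤ 2 ^ (α + 1) * w ^ α * (c₀ * x ^ (-α)) := by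
        rw [e0, e1] at h2
        have e2 : (2:ℝ) ^ (α + 1) = 2 ^ α * 2 := by
          rw [Real.rpow_add (by norm_num), Real.rpow_one]
        rw [e2]
        calc (ν (Ioi (x / (2 * w)))).toReal ≤ 2 * (c₀ * (x ^ (-α) * (2 ^ α * w ^ α))) := h2
          _ = 2 ^ α * 2 * w ^ α * (c₀ * x ^ (-α)) := by ring
      have hC1 : (2:ℝ) ^ (α + 2) ≤ C := le_max_left _ _
      have e3 : (2:ℝ) ^ (α + 2) = 2 ^ (α + 1) * 2 := by
        rw [show α + 2 = (α + 1) + 1 by ring, Real.rpow_add (by norm_num), Real.rpow_one]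
      have hp : (0:ℝ) < 2 ^ (α + 1) := Real.rpow_pos_of_pos (by norm_num) _
      calc (ν (Ici (x / w))).toReal ≤ 2 ^ (α + 1) * w ^ α * (c₀ * x ^ (-α)) := le_trans h1 h2'
        _ ≤ 2 ^ (α + 1) * w ^ α * (2 * (ν (Ioi x)).toReal) :=
            mul_le_mul_of_nonneg_left h4 (by positivity)
        _ = 2 ^ (α + 2) * w ^ α * (ν (Ioi x)).toReal := by rw [e3]; ring
        _ ≤ C * w ^ α * (ν (Ioi x)).toReal :=
            mul_le_mul_of_nonneg_right (mul_le_mul_of_nonneg_right hC1 hwα.le) hFnonneg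
    · -- x < 2 x₀ w
      have hxlt : x < 2 * x₀ * w := by
        rw [div_lt_iff₀ (by positivity)] at hcase; nlinarith
      have h1 : (ν (Ici (x / w))).toReal ≤ 1 := by
        rw [← ENNReal.toReal_one]
        exact ENNReal.toReal_mono (by norm_num) prob_le_one
      have h2 : (2 * x₀ * w) ^ (-α) < x ^ (-α) :=
        Real.rpow_lt_rpow_of_neg hx0 hxlt (by linarith)
      have e1 : (2 * x₀ * w) ^ (-α) = (2 * x₀) ^ (-α) * w ^ (-α) :=
        Real.mul_rpow (by positivity) hw.le
      have h3 : c₀ * ((2 * x₀) ^ (-α) * w ^ (-α)) ≤ 2 * (ν (Ioi x)).toReal := by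
        rw [← e1]; nlinarith
      have hC2 : 2 / c₀ * (2 * x₀) ^ α ≤ C := le_max_right _ _
      have hp1 : (0:ℝ) < (2 * x₀) ^ α := Real.rpow_pos_of_pos (by positivity) _
      have hinv1 : (2 * x₀) ^ α * (2 * x₀) ^ (-α) = 1 := by
        rw [← Real.rpow_add (by positivity)]; simp
      have hinv2 : w ^ α * w ^ (-α) = 1 := by
        rw [← Real.rpow_add hw]; simp
      have key2 : 1 ≤ 2 / c₀ * (2 * x₀) ^ α * w ^ α * (ν (Ioi x)).toReal := by
        have hmul := mul_le_mul_of_nonneg_left h3 (le_of_lt (show (0:ℝ) <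
          1 / c₀ * (2 * x₀) ^ α * w ^ α by positivity))
        have e2 : 1 / c₀ * (2 * x₀) ^ α * w ^ α * (c₀ * ((2 * x₀) ^ (-α) * w ^ (-α)))
            = (1 / c₀ * c₀) * ((2 * x₀) ^ α * (2 * x₀) ^ (-α)) * (w ^ α * w ^ (-α)) := by ring
        have e3 : (1:ℝ) / c₀ * c₀ = 1 := by field_simp
        rw [e2, e3, hinv1, hinv2] at hmul
        calc (1:ℝ) = 1 * 1 * 1 := by norm_num
          _ ≤ 1 / c₀ * (2 * x₀) ^ α * w ^ α * (2 * (ν (Ioi x)).toReal) := hmul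
          _ = 2 / c₀ * (2 * x₀) ^ α * w ^ α * (ν (Ioi x)).toReal := by ring
      calc (ν (Ici (x / w))).toReal ≤ 1 := h1
        _ ≤ 2 / c₀ * (2 * x₀) ^ α * w ^ α * (ν (Ioi x)).toReal := key2
        _ ≤ C * w ^ α * (ν (Ioi x)).toReal :=
            mul_le_mul_of_nonneg_right (mul_le_mul_of_nonneg_right hC2 hwα.le) hFnonneg
  have hwle : w ^ α ≤ 1 + w ^ (α + ε) := by
    rcases le_or_gt w 1 with hw1 | hw1
    · have h1 : w ^ α ≤ 1 := Real.rpow_le_one hw.le hw1 hα.le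
      have h2 : (0:ℝ) ≤ w ^ (α + ε) := Real.rpow_nonneg hw.le _
      linarith
    · have h1 : w ^ α ≤ w ^ (α + ε) := Real.rpow_le_rpow_of_exponent_le hw1.le (by linarith)
      linarith
  calc (ν (Ici (x / w))).toReal ≤ C * w ^ α * (ν (Ioi x)).toReal := key
    _ ≤ C * (1 + w ^ (α + ε)) * (ν (Ioi x)).toReal :=
        mul_le_mul_of_nonneg_right (mul_le_mul_of_nonneg_left hwle hCpos.le) hFnonneg

theorem breiman_aux (ν ρ : Measure ℝ) [IsProbabilityMeasure ν] [IsProbabilityMeasure ρ]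
    {c₀ α : ℝ} (hc₀ : 0 < c₀) (hα : 0 < α)
    (htail : Tendsto (fun x => (ν (Ioi x)).toReal / (c₀ * x ^ (-α))) atTop (nhds 1))
    {ε : ℝ} (hε : 0 < ε)
    (hmom : Integrable (fun z => |z| ^ (α + ε)) ρ)
    (q : ℝ → ℝ → ENNReal)
    (hqmeas : ∀ x, Measurable (q x))
    (hqle : ∀ x z, q x z ≤ 1)
    (hq0 : ∀ x, 0 < x → ∀ z ≤ 0, q x z = 0)
    (hqlb : ∀ x z, 0 < z → ν (Ioi (x / z)) ≤ q x z)
    (hqub : ∀ x z, 0 < z → q x z ≤ ν (Ici (x / z)))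
    {I : ℝ} (hI : I = ∫ z, (max z 0) ^ α ∂ρ) (hIpos : 0 < I) :
    Tendsto (fun x => (∫⁻ z, q x z ∂ρ).toReal / (I * (ν (Ioi x)).toReal)) atTop (nhds 1) := by
  set F : ℝ → ℝ := fun x => (ν (Ioi x)).toReal with hFdef
  have hFpos : ∀ᶠ x in atTop, 0 < F x := evpos hc₀ htail
  obtain ⟨C, hCpos, hdom⟩ := domination ν hc₀ hα hε htail
  have hici := ici_tail ν hc₀ hα htail
  have key : Tendsto (fun x => ∫ z, (q x z).toReal / F x ∂ρ) atTop (nhds I) := by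
    rw [hI]
    refine tendsto_integral_filter_of_dominated_convergence
      (fun z => C * (1 + |z| ^ (α + ε))) ?_ ?_ ?_ ?_
    · exact Eventually.of_forall fun x =>
        (((hqmeas x).ennreal_toReal).div_const _).aestronglyMeasurable
    · filter_upwards [hFpos, hdom, eventually_gt_atTop 0] with x hFx hdx hx0
      refine ae_of_all _ fun z => ?_
      have hFnn : 0 ≤ F x := hFx.le
      have hnn : 0 ≤ (q x z).toReal / F x := div_nonneg ENNReal.toReal_nonneg hFnn
      rw [Real.norm_of_nonneg hnn]
      have hbpos : 0 ≤ |z| ^ (α + ε) := Real.rpow_nonneg (abs_nonneg z) _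
      rcases le_or_gt z 0 with hz | hz
      · rw [hq0 x hx0 z hz]
        simp only [ENNReal.toReal_zero, zero_div]
        positivity
      · have h1 : (q x z).toReal ≤ (ν (Ici (x / z))).toReal :=
          ENNReal.toReal_mono (measure_ne_top _ _) (hqub x z hz)
        have h2 := hdx z hz
        rw [abs_of_pos hz, div_le_iff₀ hFx]
        exact le_trans h1 h2
    · exact (((integrable_const (1:ℝ)).add hmom).const_mul C)
    · refine ae_of_all _ fun z => ?_
      rcases le_or_gt z 0 with hz | hz
      · have hm : max z 0 = 0 := max_eq_right hz
        rw [hm, Real.zero_rpow hα.ne']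
        refine Tendsto.congr' ?_ tendsto_const_nhds
        filter_upwards [eventually_gt_atTop 0] with x hx0
        rw [hq0 x hx0 z hz]
        simp
      · have hm : max z 0 = z := max_eq_left hz.le
        rw [hm]
        refine tendsto_of_tendsto_of_tendsto_of_le_of_le'
          (ratio_lemma hc₀ hα htail htail hz) (ratio_lemma hc₀ hα hici htail hz) ?_ ?_
        · filter_upwards [hFpos] with x hFx
          exact (div_le_div_iff_of_pos_right hFx).mpr (ENNReal.toReal_mono
            (lt_of_le_of_lt (hqle x z) ENNReal.one_lt_top).ne (hqlb x z hz))
        · filter_upwards [hFpos] with x hFx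
          exact (div_le_div_iff_of_pos_right hFx).mpr (ENNReal.toReal_mono
            (measure_ne_top _ _) (hqub x z hz))
  have heq : ∀ x, (∫⁻ z, q x z ∂ρ).toReal / (I * F x) = (∫ z, (q x z).toReal / F x ∂ρ) / I := by
    intro x
    have h2 : ∫ z, (q x z).toReal ∂ρ = (∫⁻ z, q x z ∂ρ).toReal :=
      integral_toReal (hqmeas x).aemeasurable
        (ae_of_all _ fun z => lt_of_le_of_lt (hqle x z) ENNReal.one_lt_top)
    rw [integral_div, h2, div_div, mul_comm (F x) I]
  have hfin := key.div_const I
  rw [div_self hIpos.ne'] at hfin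
  exact hfin.congr fun x => (heq x).symm

lemma bound_aux {α ε : ℝ} (hα : 0 < α) (hε : 0 < ε) (z : ℝ) :
    (max z 0) ^ α ≤ 1 + |z| ^ (α + ε) := by
  have habs : (0:ℝ) ≤ |z| ^ (α + ε) := Real.rpow_nonneg (abs_nonneg z) _
  rcases le_or_gt z 0 with hz | hz
  · rw [max_eq_right hz, Real.zero_rpow hα.ne']; linarith
  · rw [max_eq_left hz.le, abs_of_pos hz]
    have hz2 : (0:ℝ) ≤ z ^ (α + ε) := Real.rpow_nonneg hz.le _
    rcases le_or_gt z 1 with hz1 | hz1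
    · have := Real.rpow_le_one hz.le hz1 hα.le
      linarith
    · have := Real.rpow_le_rpow_of_exponent_le hz1.le (by linarith : α ≤ α + ε)
      linarith


/-- Two-sided Breiman lemma: if `P(σ > x) ~ c₀ x^(−α)`, `Z` independent of `σ` with
`E[|Z|^(α+ε)] < ∞`, `P(Z > 0) > 0` and `P(Z < 0) > 0`, then
`P(σZ > x) ~ E[(Z⁺)^α] P(σ > x)` and `P(σZ ≤ −x) ~ E[(Z⁻)^α] P(σ > x)`. -/
theorem stmt5 {Ω : Type*} [MeasurableSpace Ω] (μ : Measure Ω) [IsProbabilityMeasure μ]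
    (σ Z : Ω → ℝ) (hσmeas : Measurable σ) (hZmeas : Measurable Z)
    (hσnonneg : ∀ ω, 0 ≤ σ ω)
    (hindep : IndepFun σ Z μ)
    (c₀ α : ℝ) (hc₀ : 0 < c₀) (hα : 0 < α)
    (htail : Tendsto (fun x : ℝ =>
      (μ {ω | σ ω > x}).toReal / (c₀ * x ^ (-α))) atTop (nhds 1))
    (ε : ℝ) (hε : 0 < ε)
    (hmom : Integrable (fun ω => |Z ω| ^ (α + ε)) μ)
    (hZpos : 0 < (μ {ω | 0 < Z ω}).toReal)
    (hZneg : 0 < (μ {ω | Z ω < 0}).toReal) :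
    Tendsto (fun x : ℝ =>
        (μ {ω | σ ω * Z ω > x}).toReal /
          ((∫ ω, (max (Z ω) 0) ^ α ∂μ) * (μ {ω | σ ω > x}).toReal))
      atTop (nhds 1) ∧
    Tendsto (fun x : ℝ =>
        (μ {ω | σ ω * Z ω ≤ -x}).toReal /
          ((∫ ω, (max (-Z ω) 0) ^ α ∂μ) * (μ {ω | σ ω > x}).toReal))
      atTop (nhds 1) := by
  have hZnegmeas : Measurable (fun ω => -Z ω) := hZmeas.neg
  set ν : Measure ℝ := μ.map σ with hνdef
  set ρ : Measure ℝ := μ.map Z with hρdef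
  set ρ' : Measure ℝ := μ.map (fun ω => -Z ω) with hρ'def
  haveI : IsProbabilityMeasure ν := Measure.isProbabilityMeasure_map hσmeas.aemeasurable
  haveI : IsProbabilityMeasure ρ := Measure.isProbabilityMeasure_map hZmeas.aemeasurable
  haveI : IsProbabilityMeasure ρ' := Measure.isProbabilityMeasure_map hZnegmeas.aemeasurable
  have hν : ∀ x : ℝ, ν (Ioi x) = μ {ω | σ ω > x} := fun x => by
    rw [hνdef, Measure.map_apply hσmeas measurableSet_Ioi]; rfl
  have htail' : Tendsto (fun x => (ν (Ioi x)).toReal / (c₀ * x ^ (-α))) atTop (nhds 1) := by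
    simp only [hν]; exact htail
  have hν0 : ν (Iio 0) = 0 := by
    rw [hνdef, Measure.map_apply hσmeas measurableSet_Iio]
    have he : σ ⁻¹' (Iio 0) = ∅ := by
      ext ω; simp [not_lt.mpr (hσnonneg ω)]
    rw [he, measure_empty]
  -- measurability of auxiliary functions
  have hgmeas : Measurable fun z : ℝ => |z| ^ (α + ε) :=
    (measurable_id.abs).pow measurable_const
  have hfmeas : Measurable fun z : ℝ => (max z 0) ^ α :=
    (measurable_id.max measurable_const).pow measurable_const
  -- moment transfers
  have hmomρ : Integrable (fun z => |z| ^ (α + ε)) ρ := by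
    rw [hρdef, integrable_map_measure hgmeas.aestronglyMeasurable hZmeas.aemeasurable]
    exact hmom
  have hmomρ' : Integrable (fun z => |z| ^ (α + ε)) ρ' := by
    rw [hρ'def, integrable_map_measure hgmeas.aestronglyMeasurable hZnegmeas.aemeasurable]
    simpa [Function.comp_def, abs_neg] using hmom
  -- integral identifications
  have hI1 : (∫ ω, (max (Z ω) 0) ^ α ∂μ) = ∫ z, (max z 0) ^ α ∂ρ := by
    rw [hρdef, integral_map hZmeas.aemeasurable hfmeas.aestronglyMeasurable]
  have hI2 : (∫ ω, (max (-Z ω) 0) ^ α ∂μ) = ∫ z, (max z 0) ^ α ∂ρ' := by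
    rw [hρ'def, integral_map hZnegmeas.aemeasurable hfmeas.aestronglyMeasurable]
  -- integrability over μ
  have hfint : Integrable (fun ω => (max (Z ω) 0) ^ α) μ := by
    refine ((integrable_const (1:ℝ)).add hmom).mono
      (((hZmeas.max measurable_const).pow measurable_const).aestronglyMeasurable)
      (ae_of_all _ fun ω => ?_)
    have h1 : (0:ℝ) ≤ (max (Z ω) 0) ^ α := Real.rpow_nonneg (le_max_right _ _) _
    have h2 : (0:ℝ) ≤ 1 + |Z ω| ^ (α + ε) := by positivity
    simp only [Pi.add_apply]
    rw [Real.norm_of_nonneg h1, Real.norm_of_nonneg h2]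
    exact bound_aux hα hε _
  have hfint' : Integrable (fun ω => (max (-Z ω) 0) ^ α) μ := by
    refine ((integrable_const (1:ℝ)).add hmom).mono
      (((hZnegmeas.max measurable_const).pow measurable_const).aestronglyMeasurable)
      (ae_of_all _ fun ω => ?_)
    have h1 : (0:ℝ) ≤ (max (-Z ω) 0) ^ α := Real.rpow_nonneg (le_max_right _ _) _
    have h2 : (0:ℝ) ≤ 1 + |Z ω| ^ (α + ε) := by positivity
    simp only [Pi.add_apply]
    rw [Real.norm_of_nonneg h1, Real.norm_of_nonneg h2]
    have := bound_aux hα hε (-Z ω)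
    rwa [abs_neg] at this
  -- positivity of limits
  have hIpos1 : 0 < ∫ ω, (max (Z ω) 0) ^ α ∂μ := by
    refine (integral_pos_iff_support_of_nonneg
      (fun ω => Real.rpow_nonneg (le_max_right _ _) _) hfint).mpr ?_
    have hsub : {ω | 0 < Z ω} ⊆ Function.support (fun ω => (max (Z ω) 0) ^ α) := by
      intro ω hω
      have : (0:ℝ) < (max (Z ω) 0) ^ α :=
        Real.rpow_pos_of_pos (lt_max_of_lt_left hω) _
      exact this.ne'
    have h0 : 0 < μ {ω | 0 < Z ω} := (ENNReal.toReal_pos_iff.mp hZpos).1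
    exact lt_of_lt_of_le h0 (measure_mono hsub)
  have hIpos2 : 0 < ∫ ω, (max (-Z ω) 0) ^ α ∂μ := by
    refine (integral_pos_iff_support_of_nonneg
      (fun ω => Real.rpow_nonneg (le_max_right _ _) _) hfint').mpr ?_
    have hsub : {ω | Z ω < 0} ⊆ Function.support (fun ω => (max (-Z ω) 0) ^ α) := by
      intro ω hω
      have : (0:ℝ) < (max (-Z ω) 0) ^ α :=
        Real.rpow_pos_of_pos (lt_max_of_lt_left (neg_pos.mpr hω)) _
      exact this.ne'
    have h0 : 0 < μ {ω | Z ω < 0} := (ENNReal.toReal_pos_iff.mp hZneg).1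
    exact lt_of_lt_of_le h0 (measure_mono hsub)
  constructor
  · -- positive tail
    set q1 : ℝ → ℝ → ENNReal := fun x z => ν {s | s * z > x} with hq1def
    have hA : ∀ x : ℝ, MeasurableSet {p : ℝ × ℝ | p.2 * p.1 > x} := fun x =>
      measurableSet_lt measurable_const (measurable_snd.mul measurable_fst)
    have hq1meas : ∀ x, Measurable (q1 x) := fun x =>
      measurable_measure_prodMk_left (hA x)
    have hq1le : ∀ x z, q1 x z ≤ 1 := fun x z => prob_le_one
    have hq10 : ∀ x, 0 < x → ∀ z ≤ 0, q1 x z = 0 := by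
      intro x hx z hz
      refine measure_mono_null (fun s hs => ?_) hν0
      simp only [mem_setOf_eq] at hs
      by_contra hcon
      simp only [mem_Iio, not_lt] at hcon
      nlinarith
    have hset1 : ∀ x z : ℝ, 0 < z → {s : ℝ | s * z > x} = Ioi (x / z) := by
      intro x z hz
      ext s
      simp only [mem_setOf_eq, mem_Ioi, gt_iff_lt]
      rw [div_lt_iff₀ hz]
    have hq1lb : ∀ x z, 0 < z → ν (Ioi (x / z)) ≤ q1 x z := fun x z hz => by
      show ν (Ioi (x / z)) ≤ ν {s | s * z > x}
      rw [hset1 x z hz]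
    have hq1ub : ∀ x z, 0 < z → q1 x z ≤ ν (Ici (x / z)) := fun x z hz => by
      show ν {s | s * z > x} ≤ ν (Ici (x / z))
      rw [hset1 x z hz]; exact measure_mono Ioi_subset_Ici_self
    have hmap : μ.map (fun ω => (Z ω, σ ω)) = ρ.prod ν :=
      (indepFun_iff_map_prod_eq_prod_map_map hZmeas.aemeasurable
        hσmeas.aemeasurable).mp hindep.symm
    have hprod1 : ∀ x : ℝ, μ {ω | σ ω * Z ω > x} = ∫⁻ z, q1 x z ∂ρ := by
      intro x
      calc μ {ω | σ ω * Z ω > x}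
          = μ ((fun ω => (Z ω, σ ω)) ⁻¹' {p : ℝ × ℝ | p.2 * p.1 > x}) := rfl
        _ = (μ.map (fun ω => (Z ω, σ ω))) {p : ℝ × ℝ | p.2 * p.1 > x} :=
            (Measure.map_apply (hZmeas.prodMk hσmeas) (hA x)).symm
        _ = (ρ.prod ν) {p : ℝ × ℝ | p.2 * p.1 > x} := by rw [hmap]
        _ = ∫⁻ z, ν (Prod.mk z ⁻¹' {p : ℝ × ℝ | p.2 * p.1 > x}) ∂ρ :=
            Measure.prod_apply (hA x)
        _ = ∫⁻ z, q1 x z ∂ρ := rfl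
    have h1 := breiman_aux ν ρ hc₀ hα htail' hε hmomρ q1 hq1meas hq1le hq10 hq1lb hq1ub
      hI1 hIpos1
    refine h1.congr fun x => ?_
    rw [← hprod1 x, hν x]
  · -- negative tail
    set q2 : ℝ → ℝ → ENNReal := fun x w => ν {s | x ≤ s * w} with hq2def
    have hA : ∀ x : ℝ, MeasurableSet {p : ℝ × ℝ | x ≤ p.2 * p.1} := fun x =>
      measurableSet_le measurable_const (measurable_snd.mul measurable_fst)
    have hq2meas : ∀ x, Measurable (q2 x) := fun x =>
      measurable_measure_prodMk_left (hA x)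
    have hq2le : ∀ x w, q2 x w ≤ 1 := fun x w => prob_le_one
    have hq20 : ∀ x, 0 < x → ∀ w ≤ 0, q2 x w = 0 := by
      intro x hx w hw
      refine measure_mono_null (fun s hs => ?_) hν0
      simp only [mem_setOf_eq] at hs
      by_contra hcon
      simp only [mem_Iio, not_lt] at hcon
      nlinarith
    have hset2 : ∀ x w : ℝ, 0 < w → {s : ℝ | x ≤ s * w} = Ici (x / w) := by
      intro x w hw
      ext s
      simp only [mem_setOf_eq, mem_Ici]
      rw [div_le_iff₀ hw]
    have hq2lb : ∀ x w, 0 < w → ν (Ioi (x / w)) ≤ q2 x w := fun x w hw => by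
      show ν (Ioi (x / w)) ≤ ν {s | x ≤ s * w}
      rw [hset2 x w hw]; exact measure_mono Ioi_subset_Ici_self
    have hq2ub : ∀ x w, 0 < w → q2 x w ≤ ν (Ici (x / w)) := fun x w hw => by
      show ν {s | x ≤ s * w} ≤ ν (Ici (x / w))
      rw [hset2 x w hw]
    have hindep' : IndepFun σ (fun ω => -Z ω) μ :=
      hindep.comp measurable_id measurable_neg
    have hmap' : μ.map (fun ω => (-Z ω, σ ω)) = ρ'.prod ν :=
      (indepFun_iff_map_prod_eq_prod_map_map hZnegmeas.aemeasurable
        hσmeas.aemeasurable).mp hindep'.symm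
    have hprod2 : ∀ x : ℝ, μ {ω | σ ω * Z ω ≤ -x} = ∫⁻ w, q2 x w ∂ρ' := by
      intro x
      have hsetω : {ω | σ ω * Z ω ≤ -x}
          = (fun ω => (-Z ω, σ ω)) ⁻¹' {p : ℝ × ℝ | x ≤ p.2 * p.1} := by
        ext ω
        simp only [mem_setOf_eq, mem_preimage]
        constructor <;> intro h <;> nlinarith
      calc μ {ω | σ ω * Z ω ≤ -x}
          = μ ((fun ω => (-Z ω, σ ω)) ⁻¹' {p : ℝ × ℝ | x ≤ p.2 * p.1}) := by rw [hsetω]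
        _ = (μ.map (fun ω => (-Z ω, σ ω))) {p : ℝ × ℝ | x ≤ p.2 * p.1} :=
            (Measure.map_apply (hZnegmeas.prodMk hσmeas) (hA x)).symm
        _ = (ρ'.prod ν) {p : ℝ × ℝ | x ≤ p.2 * p.1} := by rw [hmap']
        _ = ∫⁻ w, ν (Prod.mk w ⁻¹' {p : ℝ × ℝ | x ≤ p.2 * p.1}) ∂ρ' :=
            Measure.prod_apply (hA x)
        _ = ∫⁻ w, q2 x w ∂ρ' := rfl
    have h2 := breiman_aux ν ρ' hc₀ hα htail' hε hmomρ' q2 hq2meas hq2le hq20 hq2lb hq2ub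
      hI2 hIpos2
    refine h2.congr fun x => ?_
    rw [← hprod2 x, hν x]
end

section
/- Let Y ≥ 0 be regularly varying: P(Y > x) = x^{−α} L(x) with L slowly varying and α > 0, and let U, V be nonnegative random variables independent of Y with E[U^{α+ε}], E[V^{α+ε}] < ∞ for some ε > 0. Then lim_{x→∞} P(min(U·Y, V·Y) > x)/P(Y > x) = E[min(U, V)^α]. -/
open MeasureTheory ProbabilityTheory Filter

set_option maxHeartbeats 1600000

/-- Breiman-type result for minima: if `Y ≥ 0` is regularly varying of index `α`,
`(U, V)` is independent of `Y`, nonnegative, with moments of order `α + ε`, then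
`P(min(UY, VY) > x)/P(Y > x) → E[min(U, V)^α]`. -/
theorem stmt7 {Ω : Type*} [MeasurableSpace Ω] (μ : Measure Ω) [IsProbabilityMeasure μ]
    (Y U V : Ω → ℝ) (hYmeas : Measurable Y) (hUmeas : Measurable U) (hVmeas : Measurable V)
    (hYnonneg : ∀ ω, 0 ≤ Y ω) (hUnonneg : ∀ ω, 0 ≤ U ω) (hVnonneg : ∀ ω, 0 ≤ V ω)
    (hindep : IndepFun (fun ω => (U ω, V ω)) Y μ)
    (α : ℝ) (hα : 0 < α) (L : ℝ → ℝ)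
    (hL : ∀ c : ℝ, 0 < c →
      Tendsto (fun x : ℝ => L (c * x) / L x) atTop (nhds 1))
    (htail : ∀ x : ℝ, 0 < x → (μ {ω | Y ω > x}).toReal = x ^ (-α) * L x)
    (ε : ℝ) (hε : 0 < ε)
    (hUmom : Integrable (fun ω => U ω ^ (α + ε)) μ)
    (hVmom : Integrable (fun ω => V ω ^ (α + ε)) μ) :
    Tendsto (fun x : ℝ =>
        (μ {ω | min (U ω * Y ω) (V ω * Y ω) > x}).toReal / (μ {ω | Y ω > x}).toReal)
      atTop (nhds (∫ ω, (min (U ω) (V ω)) ^ α ∂μ)) := by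
  classical
  set W : Ω → ℝ := fun ω => min (U ω) (V ω) with hWdef
  have hW : Measurable W := hUmeas.min hVmeas
  have hWnn : ∀ ω, 0 ≤ W ω := fun ω => le_min (hUnonneg ω) (hVnonneg ω)
  set δ : ℝ := α + ε with hδdef
  have hδ : 0 < δ := by positivity
  have hαδ : α < δ := by simp [hδdef]; linarith
  set ν : Measure ℝ := μ.map W with hνdef
  haveI hνprob : IsProbabilityMeasure ν := Measure.isProbabilityMeasure_map hW.aemeasurable
  haveI : IsProbabilityMeasure (μ.map Y) := Measure.isProbabilityMeasure_map hYmeas.aemeasurable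
  set Fbar : ℝ → ℝ := fun x => (μ {ω | Y ω > x}).toReal with hFdef
  have hFanti : Antitone Fbar := fun a b hab =>
    ENNReal.toReal_mono (measure_ne_top μ _)
      (measure_mono fun ω hω => lt_of_le_of_lt hab hω)
  have hFnonneg : ∀ x, 0 ≤ Fbar x := fun x => ENNReal.toReal_nonneg
  -- positivity of L and Fbar
  have hLx : ∀ x : ℝ, 0 < x → L x = x ^ α * Fbar x := by
    intro x hx
    have hne : (x : ℝ) ^ α ≠ 0 := (Real.rpow_pos_of_pos hx α).ne'
    rw [hFdef]
    simp only [htail x hx, Real.rpow_neg hx.le]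
    field_simp
  have hFpos : ∀ x : ℝ, 0 < Fbar x := by
    by_contra h
    push_neg at h
    obtain ⟨x0, hx0⟩ := h
    have hx0' : Fbar x0 = 0 := le_antisymm hx0 (hFnonneg x0)
    have hzero : ∀ y : ℝ, max x0 1 ≤ y → L y = 0 := by
      intro y hy
      have hypos : (0:ℝ) < y := lt_of_lt_of_le (lt_of_lt_of_le one_pos (le_max_right x0 1)) hy
      have hFy : Fbar y = 0 := le_antisymm
        (hx0' ▸ hFanti (le_trans (le_max_left x0 1) hy)) (hFnonneg y)
      rw [hLx y hypos, hFy, mul_zero]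
    have h0 : Tendsto (fun x : ℝ => L (1 * x) / L x) atTop (nhds 0) := by
      apply Tendsto.congr' _ tendsto_const_nhds
      filter_upwards [eventually_ge_atTop (max x0 1)] with y hy
      rw [one_mul, hzero y hy, zero_div]
    have hcontra := tendsto_nhds_unique (hL 1 one_pos) h0
    norm_num at hcontra
  have hLpos : ∀ x : ℝ, 0 < x → 0 < L x := by
    intro x hx; rw [hLx x hx]
    exact mul_pos (Real.rpow_pos_of_pos hx α) (hFpos x)
  -- the basic ratio limit
  have hRatio : ∀ w : ℝ, 0 < w →
      Tendsto (fun x => Fbar (x / w) / Fbar x) atTop (nhds (w ^ α)) := by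
    intro w hw
    have h := (hL w⁻¹ (inv_pos.2 hw)).const_mul (w ^ α)
    rw [mul_one] at h
    apply h.congr'
    filter_upwards [eventually_gt_atTop 0] with x hx
    have hxw : 0 < x / w := div_pos hx hw
    have hLxne : (L x) ≠ 0 := (hLpos x hx).ne'
    have e1 : Fbar (x / w) = (x / w) ^ (-α) * L (x / w) := htail _ hxw
    have e2 : Fbar x = x ^ (-α) * L x := htail _ hx
    have e3 : (x / w) ^ (-α) = x ^ (-α) * w ^ α := by
      rw [Real.div_rpow hx.le hw.le, Real.rpow_neg hx.le, Real.rpow_neg hw.le,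
        div_eq_mul_inv, inv_inv]
    have e4 : w⁻¹ * x = x / w := by ring
    have hxne : (x : ℝ) ^ (-α) ≠ 0 := (Real.rpow_pos_of_pos hx _).ne'
    rw [e1, e2, e3, e4]
    field_simp
  -- the doubling constant
  set K : ℝ := (2:ℝ) ^ δ with hKdef
  have hKpos : (0:ℝ) < K := Real.rpow_pos_of_pos two_pos δ
  have hK1 : (1:ℝ) < K := Real.one_lt_rpow_iff_of_pos two_pos |>.2 (Or.inl ⟨one_lt_two, hδ⟩)
  have hKα : (2:ℝ) ^ α < K := by
    rw [hKdef]; exact Real.rpow_lt_rpow_left_iff one_lt_two |>.2 hαδ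
  -- eventual doubling bound
  have hF2 : Tendsto (fun y : ℝ => Fbar y / Fbar (2 * y)) atTop (nhds ((2:ℝ) ^ α)) := by
    have hcomp : Tendsto (fun y : ℝ => 2 * y) atTop atTop :=
      Tendsto.const_mul_atTop two_pos tendsto_id
    have := (hRatio 2 two_pos).comp hcomp
    apply this.congr
    intro y
    simp only [Function.comp]
    rw [mul_comm (2:ℝ) y, mul_div_assoc]
    norm_num
  obtain ⟨X0, hX0⟩ := (eventually_atTop.1 (hF2.eventually_le_const hKα))
  set X : ℝ := max X0 1 with hXdef
  have hX1 : (1:ℝ) ≤ X := le_max_right _ _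
  have hXpos : (0:ℝ) < X := lt_of_lt_of_le one_pos hX1
  have hXK : ∀ y : ℝ, X ≤ y → Fbar y ≤ K * Fbar (2 * y) := by
    intro y hy
    have h := hX0 y (le_trans (le_max_left _ _) hy)
    have h2 : 0 < Fbar (2 * y) := hFpos _
    calc Fbar y = Fbar y / Fbar (2*y) * Fbar (2*y) := by field_simp
      _ ≤ K * Fbar (2 * y) := mul_le_mul_of_nonneg_right h h2.le
  -- chaining
  have hchain : ∀ k : ℕ, ∀ y : ℝ, X ≤ y → Fbar y ≤ K ^ k * Fbar (2 ^ k * y) := by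
    intro k
    induction k with
    | zero => intro y hy; simp
    | succ n ih =>
      intro y hy
      have hypos : 0 < y := lt_of_lt_of_le hXpos hy
      have h2 : X ≤ 2 ^ n * y :=
        le_trans hy (le_mul_of_one_le_left hypos.le (one_le_pow₀ one_le_two))
      have e : (2:ℝ) * (2 ^ n * y) = 2 ^ (n+1) * y := by ring
      calc Fbar y ≤ K ^ n * Fbar (2 ^ n * y) := ih y hy
        _ ≤ K ^ n * (K * Fbar (2 * (2 ^ n * y))) :=
            mul_le_mul_of_nonneg_left (hXK _ h2) (pow_nonneg hKpos.le n)
        _ = K ^ (n+1) * Fbar (2 ^ (n+1) * y) := by rw [e]; ring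
  -- exponent extraction
  have hexp : ∀ w : ℝ, 1 ≤ w → ∃ k : ℕ, w ≤ 2 ^ k ∧ (2:ℝ) ^ k ≤ 2 * w := by
    intro w hw
    have hwpos : (0:ℝ) < w := lt_of_lt_of_le one_pos hw
    refine ⟨⌈Real.logb 2 w⌉₊, ?_, ?_⟩
    · have h1 : Real.logb 2 w ≤ (⌈Real.logb 2 w⌉₊ : ℝ) := Nat.le_ceil _
      calc w = (2:ℝ) ^ Real.logb 2 w :=
            (Real.rpow_logb two_pos (by norm_num) hwpos).symm
        _ ≤ (2:ℝ) ^ ((⌈Real.logb 2 w⌉₊ : ℝ)) :=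
            Real.rpow_le_rpow_of_exponent_le one_le_two h1
        _ = (2:ℝ) ^ (⌈Real.logb 2 w⌉₊ : ℕ) := Real.rpow_natCast 2 _
    · have h0 : 0 ≤ Real.logb 2 w := Real.logb_nonneg one_lt_two hw
      have h2 : (⌈Real.logb 2 w⌉₊ : ℝ) < Real.logb 2 w + 1 := Nat.ceil_lt_add_one h0
      calc (2:ℝ) ^ (⌈Real.logb 2 w⌉₊ : ℕ) = (2:ℝ) ^ ((⌈Real.logb 2 w⌉₊ : ℝ)) :=
            (Real.rpow_natCast 2 _).symm
        _ ≤ (2:ℝ) ^ (Real.logb 2 w + 1) :=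
            Real.rpow_le_rpow_of_exponent_le one_le_two h2.le
        _ = 2 * w := by
            rw [Real.rpow_add two_pos, Real.rpow_logb two_pos (by norm_num) hwpos,
              Real.rpow_one]; ring
  have hKpow : ∀ (k : ℕ) (w : ℝ), 0 ≤ w → (2:ℝ) ^ k ≤ 2 * w → K ^ k ≤ K * w ^ δ := by
    intro k w hw h2k
    have h1 : K ^ k = ((2:ℝ) ^ k) ^ δ := by
      rw [hKdef, ← Real.rpow_natCast ((2:ℝ) ^ δ) k, ← Real.rpow_natCast (2:ℝ) k,
        ← Real.rpow_mul (by norm_num : (0:ℝ) ≤ 2),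
        ← Real.rpow_mul (by norm_num : (0:ℝ) ≤ 2), mul_comm]
    rw [h1]
    calc ((2:ℝ) ^ k) ^ δ ≤ (2 * w) ^ δ := Real.rpow_le_rpow (by positivity) h2k hδ.le
      _ = K * w ^ δ := by rw [Real.mul_rpow (by norm_num) hw, hKdef]
  -- upper Potter-type bound
  have hA : ∀ w : ℝ, 1 ≤ w → ∀ x : ℝ, 2 * X ≤ x / w → Fbar (x / w) ≤ K * w ^ δ * Fbar x := by
    intro w hw x hxw
    obtain ⟨k, hk1, hk2⟩ := hexp w hw
    have hwpos : (0:ℝ) < w := lt_of_lt_of_le one_pos hw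
    have hdivpos : 0 < x / w := lt_of_lt_of_le (by positivity) hxw
    have hxpos : 0 < x := by
      have h := mul_pos hdivpos hwpos
      rwa [div_mul_cancel₀ x hwpos.ne'] at h
    have hxw' : 2 * X * w ≤ x := by
      rw [le_div_iff₀ hwpos] at hxw; linarith
    have h2kpos : (0:ℝ) < 2 ^ k := by positivity
    have hy : X ≤ x / 2 ^ k := by
      rw [le_div_iff₀ h2kpos]
      nlinarith
    calc Fbar (x / w) ≤ Fbar (x / 2 ^ k) := by
          apply hFanti
          apply div_le_div_of_nonneg_left hxpos.le hwpos hk1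
      _ ≤ K ^ k * Fbar (2 ^ k * (x / 2 ^ k)) := hchain k _ hy
      _ = K ^ k * Fbar x := by rw [mul_div_cancel₀ x h2kpos.ne']
      _ ≤ K * w ^ δ * Fbar x :=
          mul_le_mul_of_nonneg_right (hKpow k w (by linarith) hk2) (hFnonneg x)
  -- lower bound on Fbar
  set c : ℝ := Fbar X * X ^ δ / K with hcdef
  have hcpos : 0 < c := by
    apply div_pos (mul_pos (hFpos X) (Real.rpow_pos_of_pos hXpos δ)) hKpos
  have hB : ∀ x : ℝ, X ≤ x → c * x ^ (-δ) ≤ Fbar x := by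
    intro x hx
    have hxpos : 0 < x := lt_of_lt_of_le hXpos hx
    have hw : 1 ≤ x / X := (one_le_div hXpos).2 hx
    obtain ⟨m, hm1, hm2⟩ := hexp (x / X) hw
    have h2mX : x ≤ 2 ^ m * X := by
      rw [div_le_iff₀ hXpos] at hm1; linarith
    have h1 : Fbar X ≤ K ^ m * Fbar (2 ^ m * X) := hchain m X le_rfl
    have h2 : Fbar (2 ^ m * X) ≤ Fbar x := hFanti h2mX
    have h3 : K ^ m ≤ K * (x / X) ^ δ := hKpow m _ (by positivity) hm2
    have key : Fbar X ≤ K * (x / X) ^ δ * Fbar x := by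
      calc Fbar X ≤ K ^ m * Fbar x :=
            le_trans h1 (mul_le_mul_of_nonneg_left h2 (pow_nonneg hKpos.le m))
        _ ≤ K * (x / X) ^ δ * Fbar x := mul_le_mul_of_nonneg_right h3 (hFnonneg x)
    have hdiv : (x / X) ^ δ = x ^ δ / X ^ δ := Real.div_rpow hxpos.le hXpos.le δ
    have hxδ : (0:ℝ) < x ^ δ := Real.rpow_pos_of_pos hxpos δ
    have hXδ : (0:ℝ) < X ^ δ := Real.rpow_pos_of_pos hXpos δ
    have key2 : Fbar X * X ^ δ ≤ K * x ^ δ * Fbar x := by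
      rw [hdiv] at key
      have := mul_le_mul_of_nonneg_right key hXδ.le
      calc Fbar X * X ^ δ ≤ K * (x ^ δ / X ^ δ) * Fbar x * X ^ δ := this
        _ = K * x ^ δ * Fbar x := by field_simp
    rw [Real.rpow_neg hxpos.le, hcdef, ← div_eq_mul_inv, div_div, div_le_iff₀ (by positivity)]
    calc Fbar X * X ^ δ ≤ K * x ^ δ * Fbar x := key2
      _ = Fbar x * (K * x ^ δ) := by ring
  -- the domination constant
  set C : ℝ := max K ((2 * X) ^ δ / c) with hCdef
  have hCK : K ≤ C := le_max_left _ _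
  have hC2 : (2 * X) ^ δ / c ≤ C := le_max_right _ _
  have hC1 : (1:ℝ) ≤ C := le_trans hK1.le hCK
  have hC0 : (0:ℝ) ≤ C := by linarith
  -- measure-theoretic setup
  set G : ℝ → ℝ → ℝ := fun x w => ((μ.map Y) {y : ℝ | w * y > x}).toReal with hGdef
  have hsetmeas : ∀ x : ℝ, MeasurableSet {p : ℝ × ℝ | p.1 * p.2 > x} := fun x =>
    measurableSet_lt measurable_const (measurable_fst.mul measurable_snd)
  have hGmeas : ∀ x : ℝ, Measurable (G x) := fun x =>
    (measurable_measure_prodMk_left (hsetmeas x)).ennreal_toReal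
  have hGnonneg : ∀ x w, 0 ≤ G x w := fun x w => ENNReal.toReal_nonneg
  have hGle1 : ∀ x w, G x w ≤ 1 := fun x w => by
    simpa using ENNReal.toReal_mono ENNReal.one_ne_top prob_le_one
  have hindepWY : IndepFun W Y μ := by
    exact hindep.comp (measurable_fst.min measurable_snd) measurable_id
  have hmap : μ.map (fun ω => (W ω, Y ω)) = ν.prod (μ.map Y) :=
    (indepFun_iff_map_prod_eq_prod_map_map hW.aemeasurable hYmeas.aemeasurable).mp hindepWY
  have hkey : ∀ x : ℝ, (μ {ω | W ω * Y ω > x}).toReal = ∫ w, G x w ∂ν := by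
    intro x
    have h1 : μ {ω | W ω * Y ω > x} = (ν.prod (μ.map Y)) {p : ℝ × ℝ | p.1 * p.2 > x} := by
      rw [← hmap, Measure.map_apply (hW.prodMk hYmeas) (hsetmeas x)]
      rfl
    rw [h1, Measure.prod_apply (hsetmeas x)]
    exact (integral_toReal (measurable_measure_prodMk_left (hsetmeas x)).aemeasurable
      (ae_of_all _ fun w => measure_lt_top _ _)).symm
  have hGpos : ∀ x : ℝ, 0 < x → ∀ w : ℝ, 0 < w → G x w = Fbar (x / w) := by
    intro x hx w hw
    have hset : {y : ℝ | w * y > x} = Set.Ioi (x / w) := by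
      ext y
      simp only [Set.mem_setOf_eq, Set.mem_Ioi, gt_iff_lt, div_lt_iff₀ hw]
      constructor <;> intro h <;> linarith [mul_comm w y]
    simp only [hGdef]
    simp only [hset]
    rw [Measure.map_apply hYmeas measurableSet_Ioi]
    rfl
  have hG0 : ∀ x : ℝ, 0 < x → G x 0 = 0 := by
    intro x hx
    have hset : {y : ℝ | (0:ℝ) * y > x} = (∅ : Set ℝ) := by
      ext y; simp only [Set.mem_setOf_eq, zero_mul, gt_iff_lt, Set.mem_empty_iff_false,
        iff_false, not_lt]
      linarith
    simp only [hGdef]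
    simp only [hset, measure_empty, ENNReal.toReal_zero]
  have haeν : ∀ᵐ w ∂ν, 0 ≤ w := by
    rw [hνdef, ae_map_iff hW.aemeasurable measurableSet_Ici]
    exact ae_of_all _ hWnn
  -- integrability of the bound
  have hrpowδmeas : Measurable fun w : ℝ => w ^ δ :=
    (Real.continuous_rpow_const hδ.le).measurable
  have hWint : Integrable (fun w : ℝ => w ^ δ) ν := by
    rw [hνdef, integrable_map_measure hrpowδmeas.aestronglyMeasurable hW.aemeasurable]
    have heq : ((fun w : ℝ => w ^ δ) ∘ W) = fun ω => W ω ^ δ := rfl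
    rw [heq]
    apply hUmom.mono (hrpowδmeas.comp hW).aestronglyMeasurable
    apply ae_of_all
    intro ω
    show ‖W ω ^ δ‖ ≤ ‖U ω ^ δ‖
    have h1 : 0 ≤ W ω ^ δ := Real.rpow_nonneg (hWnn ω) δ
    have h2 : 0 ≤ U ω ^ δ := Real.rpow_nonneg (hUnonneg ω) δ
    rw [Real.norm_of_nonneg h1, Real.norm_of_nonneg h2]
    exact Real.rpow_le_rpow (hWnn ω) (min_le_left _ _) hδ.le
  set B : ℝ → ℝ := fun w => C * (1 + w ^ δ) with hBdef
  have hBint : Integrable B ν := ((integrable_const (1:ℝ)).add hWint).const_mul C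
  -- dominated convergence
  have hDCT : Tendsto (fun x => ∫ w, G x w / Fbar x ∂ν) atTop (nhds (∫ w, w ^ α ∂ν)) := by
    apply tendsto_integral_filter_of_dominated_convergence B
    · filter_upwards with x
      exact ((hGmeas x).div_const _).aestronglyMeasurable
    · filter_upwards [eventually_ge_atTop (2 * X)] with x hx
      filter_upwards [haeν] with w hw
      have hxpos : 0 < x := lt_of_lt_of_le (by positivity) hx
      have hxX : X ≤ x := le_trans (by linarith) hx
      have hnorm : ‖G x w / Fbar x‖ = G x w / Fbar x :=
        Real.norm_of_nonneg (div_nonneg (hGnonneg x w) (hFpos x).le)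
      rw [hnorm]
      rcases eq_or_lt_of_le hw with h0 | h0
      · rw [← h0, hG0 x hxpos, zero_div]
        simp only [hBdef]
        have h1 : (0:ℝ) ≤ (0:ℝ) ^ δ := Real.rpow_nonneg le_rfl δ
        nlinarith
      rcases le_or_gt w 1 with hw1 | hw1
      · -- small w: ratio at most 1
        have hle : G x w ≤ Fbar x := by
          rw [hGpos x hxpos w h0]
          apply hFanti
          rw [le_div_iff₀ h0]
          nlinarith
        have h1 : G x w / Fbar x ≤ 1 := (div_le_one (hFpos x)).2 hle
        have h2 : (0:ℝ) ≤ w ^ δ := Real.rpow_nonneg hw δ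
        have h3 : (1:ℝ) ≤ B w := by simp only [hBdef]; nlinarith
        linarith
      rcases le_or_gt (2 * X) (x / w) with hcase | hcase
      · -- middle w: Potter bound
        rw [div_le_iff₀ (hFpos x)]
        have hwδ : (0:ℝ) ≤ w ^ δ := Real.rpow_nonneg hw δ
        calc G x w = Fbar (x / w) := hGpos x hxpos w h0
          _ ≤ K * w ^ δ * Fbar x := hA w hw1.le x hcase
          _ ≤ B w * Fbar x := by
              apply mul_le_mul_of_nonneg_right _ (hFnonneg x)
              simp only [hBdef]
              nlinarith
      · -- large w: use the lower bound on Fbar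
        rw [div_le_iff₀ (hFpos x)]
        have h2Xw : x ≤ 2 * X * w := by
          rw [div_lt_iff₀ h0] at hcase; nlinarith
        have hxδ : (0:ℝ) < x ^ δ := Real.rpow_pos_of_pos hxpos δ
        have hwδ : (0:ℝ) ≤ w ^ δ := Real.rpow_nonneg hw δ
        have hxd : x ^ δ ≤ (2 * X) ^ δ * w ^ δ := by
          rw [← Real.mul_rpow (by positivity) hw]
          exact Real.rpow_le_rpow hxpos.le h2Xw hδ.le
        have hone : (1:ℝ) ≤ B w * Fbar x := by
          have hb1 : c * x ^ (-δ) ≤ Fbar x := hB x hxX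
          have e : ((2 * X) ^ δ / c) * w ^ δ * (c * x ^ (-δ)) =
              ((2 * X) ^ δ * w ^ δ) / x ^ δ := by
            rw [Real.rpow_neg hxpos.le]
            field_simp
          have h1 : (1:ℝ) ≤ ((2 * X) ^ δ / c) * w ^ δ * (c * x ^ (-δ)) := by
            rw [e, le_div_iff₀ hxδ, one_mul]
            exact hxd
          have h2 : ((2 * X) ^ δ / c) * w ^ δ * (c * x ^ (-δ)) ≤ B w * Fbar x := by
            apply mul_le_mul _ hb1 (by positivity) _
            · simp only [hBdef]
              have h2X : (0:ℝ) ≤ (2 * X) ^ δ / c := by positivity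
              nlinarith
            · simp only [hBdef]; positivity
          linarith
        calc G x w ≤ 1 := hGle1 x w
          _ ≤ B w * Fbar x := hone
    · exact hBint
    · filter_upwards [haeν] with w hw
      rcases eq_or_lt_of_le hw with h0 | h0
      · rw [← h0, Real.zero_rpow hα.ne']
        apply Tendsto.congr' _ tendsto_const_nhds
        filter_upwards [eventually_gt_atTop 0] with x hx
        rw [hG0 x hx, zero_div]
      · apply (hRatio w h0).congr'
        filter_upwards [eventually_gt_atTop 0] with x hx
        rw [hGpos x hx w h0]
  -- final assembly
  have htarget : ∫ w, w ^ α ∂ν = ∫ ω, (min (U ω) (V ω)) ^ α ∂μ := by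
    rw [hνdef, integral_map hW.aemeasurable
      ((Real.continuous_rpow_const hα.le).measurable.aestronglyMeasurable)]
  rw [← htarget]
  apply Tendsto.congr' _ hDCT
  filter_upwards [eventually_gt_atTop 0] with x hx
  have hsets : {ω | min (U ω * Y ω) (V ω * Y ω) > x} = {ω | W ω * Y ω > x} := by
    ext ω
    simp only [Set.mem_setOf_eq, hWdef, min_mul_of_nonneg _ _ (hYnonneg ω)]
  rw [hsets, hkey x, integral_div]
end

section
/- Let (A_t, B_t), t ∈ ℤ, be iid pairs of nonnegative random variables with E[log⁺ A₀] < ∞, E[log⁺ B₀] < ∞, and E[log A₀] < 0. Then the series Y_t = B_t + Σ_{k=1}^∞ A_t A_{t−1} ⋯ A_{t−k+1} B_{t−k} converges almost surely for every t and defines the unique strictly stationary causal solution of the stochastic recurrence equation Y_t = A_t Y_{t−1} + B_t. -/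
open MeasureTheory ProbabilityTheory Filter

section BrandtAux

open Finset Topology


lemma aux_tsum_toReal {f : ℕ → ℝ} (hf : ∀ n, 0 ≤ f n) :
    ∑' n, f n = (∑' n, ENNReal.ofReal (f n)).toReal := by
  by_cases hs : Summable f
  · rw [← ENNReal.ofReal_tsum_of_nonneg hf hs, ENNReal.toReal_ofReal (tsum_nonneg hf)]
  · rw [tsum_eq_zero_of_not_summable hs]
    have : ∑' n, ENNReal.ofReal (f n) = ⊤ := by
      by_contra h
      have := ENNReal.summable_toReal h
      apply hs
      refine this.congr fun n => ?_
      rw [ENNReal.toReal_ofReal (hf n)]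
    rw [this, ENNReal.toReal_top]

lemma aux_meas_comap {α β : Type*} [mβ : MeasurableSpace β] (Φ : α → β) :
    Measurable[MeasurableSpace.comap Φ mβ] Φ := fun s hs => ⟨s, hs, rfl⟩

private lemma r1 (x M : ℝ) (hM : 0 ≤ M) :
    max x (-M) = max x 0 - min (max (-x) 0) M := by
  rcases le_total 0 x with h0 | h0
  · rw [max_eq_left (le_trans (neg_nonpos.2 hM) h0), max_eq_left h0,
      max_eq_right (neg_nonpos.2 h0), min_eq_left hM]
    ring
  · rcases le_total (-x) M with h1 | h1
    · rw [max_eq_left (show -M ≤ x by linarith), max_eq_right h0,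
        max_eq_left (show (0:ℝ) ≤ -x by linarith), min_eq_left h1]
      ring
    · rw [max_eq_right (show x ≤ -M by linarith), max_eq_right h0,
        max_eq_left (show (0:ℝ) ≤ -x by linarith), min_eq_right h1]
      ring

private lemma r2 (x M : ℝ) (hM : 0 ≤ M) : |max x (-M)| ≤ |x| := by
  rcases le_total x (-M) with h1 | h1
  · rw [max_eq_right h1, abs_of_nonpos (by linarith), abs_of_nonpos (by linarith)]
    linarith
  · rw [max_eq_left h1]

private lemma r3 (x M : ℝ) (hM : 0 ≤ M) : |max x (-M)| ≤ max x 0 + M := by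
  have h2 : (0:ℝ) ≤ max x 0 := le_max_right _ _
  rcases le_total x (-M) with h1 | h1
  · rw [max_eq_right h1, abs_of_nonpos (by linarith)]
    linarith
  · rw [max_eq_left h1]
    rcases le_total 0 x with h0 | h0
    · rw [abs_of_nonneg h0]
      have : x ≤ max x 0 := le_max_left _ _
      linarith
    · rw [abs_of_nonpos h0]; linarith

lemma aux_choose_M {Ω : Type*} [MeasurableSpace Ω] (μ : Measure Ω) [IsProbabilityMeasure μ]
    (h : Ω → ℝ) (hmeas : Measurable h)
    (hplus : Integrable (fun ω => max (h ω) 0) μ)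
    (hneg : ¬ Integrable h μ ∨ ∫ ω, h ω ∂μ < 0) :
    ∃ M : ℕ, Integrable (fun ω => max (h ω) (-(M:ℝ))) μ ∧
      ∫ ω, max (h ω) (-(M:ℝ)) ∂μ < 0 := by
  have hFmeas : ∀ M : ℝ, Measurable (fun ω => max (h ω) (-M)) :=
    fun M => hmeas.max measurable_const
  have hFint : ∀ M : ℕ, Integrable (fun ω => max (h ω) (-(M:ℝ))) μ := by
    intro M
    refine Integrable.mono' (hplus.add (integrable_const (M:ℝ)))
      (hFmeas M).aestronglyMeasurable (ae_of_all _ fun ω => ?_)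
    simpa [Real.norm_eq_abs] using r3 (h ω) M (Nat.cast_nonneg M)
  by_contra hcon
  push_neg at hcon
  have hge : ∀ M : ℕ, 0 ≤ ∫ ω, max (h ω) (-(M:ℝ)) ∂μ := fun M => hcon M (hFint M)
  have lmeas : Measurable (fun ω => max (-h ω) 0) := hmeas.neg.max measurable_const
  have lnonneg : ∀ ω, (0:ℝ) ≤ max (-h ω) 0 := fun ω => le_max_right _ _
  have qint : ∀ M : ℕ, Integrable (fun ω => min (max (-h ω) 0) (M:ℝ)) μ := by
    intro M
    refine Integrable.mono' (integrable_const (M:ℝ))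
      ((lmeas.min measurable_const).aestronglyMeasurable) (ae_of_all _ fun ω => ?_)
    rw [Real.norm_eq_abs, abs_of_nonneg (le_min (lnonneg ω) (Nat.cast_nonneg M))]
    exact min_le_right _ _
  have hqle : ∀ M : ℕ, ∫ ω, min (max (-h ω) 0) (M:ℝ) ∂μ ≤ ∫ ω, max (h ω) 0 ∂μ := by
    intro M
    have := hge M
    have heq : ∫ ω, max (h ω) (-(M:ℝ)) ∂μ
        = ∫ ω, max (h ω) 0 ∂μ - ∫ ω, min (max (-h ω) 0) (M:ℝ) ∂μ := by
      rw [← integral_sub hplus (qint M)]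
      exact integral_congr_ae (ae_of_all _ fun ω => r1 (h ω) M (Nat.cast_nonneg M))
    linarith
  have lintegral_bound : ∫⁻ ω, ENNReal.ofReal (max (-h ω) 0) ∂μ
      ≤ ENNReal.ofReal (∫ ω, max (h ω) 0 ∂μ) := by
    have key : ∫⁻ ω, ENNReal.ofReal (max (-h ω) 0) ∂μ
        = ⨆ M : ℕ, ∫⁻ ω, ENNReal.ofReal (min (max (-h ω) 0) (M:ℝ)) ∂μ := by
      rw [← lintegral_iSup (fun M => (lmeas.min measurable_const).ennreal_ofReal)
        (fun M N hMN ω => ENNReal.ofReal_le_ofReal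
          (min_le_min le_rfl (Nat.cast_le.2 hMN)))]
      congr 1
      ext ω
      refine le_antisymm (le_iSup_of_le ⌈max (-h ω) 0⌉₊ ?_)
        (iSup_le fun n => ENNReal.ofReal_le_ofReal (min_le_left _ _))
      rw [min_eq_left (Nat.le_ceil _)]
    rw [key]
    refine iSup_le fun M => ?_
    rw [← ofReal_integral_eq_lintegral_ofReal (qint M)
      (ae_of_all _ fun ω => le_min (lnonneg ω) (Nat.cast_nonneg M))]
    exact ENNReal.ofReal_le_ofReal (hqle M)
  have lint : Integrable (fun ω => max (-h ω) 0) μ := by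
    refine ⟨lmeas.aestronglyMeasurable, ?_⟩
    rw [hasFiniteIntegral_iff_ofReal (ae_of_all _ lnonneg)]
    exact lt_of_le_of_lt lintegral_bound ENNReal.ofReal_lt_top
  have hint : Integrable h μ := by
    have heq : (fun ω => max (h ω) 0 - max (-h ω) 0) = h := by
      funext ω
      exact max_zero_sub_max_neg_zero_eq_self (h ω)
    rw [← heq]
    exact hplus.sub lint
  have htend : Tendsto (fun M : ℕ => ∫ ω, max (h ω) (-(M:ℝ)) ∂μ) atTop
      (𝓝 (∫ ω, h ω ∂μ)) := by
    refine tendsto_integral_of_dominated_convergence (fun ω => |h ω|)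
      (fun M => (hFmeas M).aestronglyMeasurable) hint.abs
      (fun M => ae_of_all _ fun ω => ?_) (ae_of_all _ fun ω => ?_)
    · simpa [Real.norm_eq_abs] using r2 (h ω) M (Nat.cast_nonneg M)
    · refine Tendsto.congr' ?_ tendsto_const_nhds
      filter_upwards [eventually_ge_atTop ⌈-h ω⌉₊] with M hM
      rw [eq_comm, max_eq_left]
      have : -h ω ≤ (M:ℝ) := le_trans (Nat.le_ceil _) (Nat.cast_le.2 hM)
      linarith
  have hfin : 0 ≤ ∫ ω, h ω ∂μ := ge_of_tendsto' htend hge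
  rcases hneg with hn | hn
  · exact hn hint
  · linarith

lemma aux_cesaro {L : ℕ → ℝ} {c : ℝ}
    (hL : Tendsto (fun n : ℕ => (∑ i ∈ range n, L i) / n) atTop (𝓝 c)) :
    Tendsto (fun n : ℕ => L n / n) atTop (𝓝 0) := by
  have h1 : Tendsto (fun n : ℕ => (∑ i ∈ range (n + 1), L i) / (n + 1)) atTop (𝓝 c) := by
    have := hL.comp (tendsto_add_atTop_nat 1)
    refine this.congr fun n => ?_
    simp [Function.comp]
  have h2 : Tendsto (fun n : ℕ => ((n : ℝ) + 1) / n) atTop (𝓝 1) := by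
    have := (tendsto_const_nhds (x := (1:ℝ))).add (tendsto_one_div_atTop_nhds_zero_nat)
    refine Tendsto.congr' ?_ (by simpa using this)
    filter_upwards [eventually_ge_atTop 1] with n hn
    have : (n : ℝ) ≠ 0 := by positivity
    field_simp
  have key : Tendsto (fun n : ℕ =>
      ((∑ i ∈ range (n + 1), L i) / (n + 1)) * (((n : ℝ) + 1) / n)
        - (∑ i ∈ range n, L i) / n) atTop (𝓝 (c * 1 - c)) :=
    (h1.mul h2).sub hL
  rw [show c * 1 - c = 0 by ring] at key
  refine Tendsto.congr' ?_ key
  filter_upwards [eventually_ge_atTop 1] with n hn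
  have hn0 : (n : ℝ) ≠ 0 := by positivity
  have hn1 : (n : ℝ) + 1 ≠ 0 := by positivity
  rw [Finset.sum_range_succ]
  field_simp
  ring

lemma aux_det {x L : ℕ → ℝ} {m c : ℝ} (hm : m < 0)
    (hx : Tendsto (fun n : ℕ => (∑ i ∈ range n, x i) / n) atTop (𝓝 m))
    (hL : Tendsto (fun n : ℕ => (∑ i ∈ range n, L i) / n) atTop (𝓝 c))
    {P T : ℕ → ℝ} (hP0 : ∀ n, 0 ≤ P n)
    (hPle : ∀ n, P n ≤ Real.exp (∑ i ∈ range n, x i))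
    (hT0 : ∀ n, 0 ≤ T n)
    (hTle : ∀ n, T n ≤ Real.exp ((∑ i ∈ range n, x i) + L n)) :
    Summable T ∧ Tendsto P atTop (𝓝 0) := by
  have hLn : Tendsto (fun n : ℕ => L n / n) atTop (𝓝 0) := aux_cesaro hL
  have hv : Tendsto (fun n : ℕ => ((∑ i ∈ range n, x i) + L n) / n) atTop (𝓝 m) := by
    have := hx.add hLn
    rw [add_zero] at this
    refine Tendsto.congr' ?_ this
    filter_upwards [eventually_ge_atTop 1] with n hn
    have hn0 : (n : ℝ) ≠ 0 := by positivity
    field_simp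
  have hm2 : m < m / 2 := by linarith
  have hm2neg : m / 2 < 0 := by linarith
  -- eventual bounds
  have hvev : ∀ᶠ n : ℕ in atTop, ((∑ i ∈ range n, x i) + L n) ≤ (m / 2) * n := by
    filter_upwards [hv.eventually_lt_const hm2, eventually_ge_atTop 1] with n h1 h2
    have hn0 : (0:ℝ) < n := by positivity
    rw [div_lt_iff₀ hn0] at h1
    linarith
  have huev : ∀ᶠ n : ℕ in atTop, (∑ i ∈ range n, x i) ≤ (m / 2) * n := by
    filter_upwards [hx.eventually_lt_const hm2, eventually_ge_atTop 1] with n h1 h2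
    have hn0 : (0:ℝ) < n := by positivity
    rw [div_lt_iff₀ hn0] at h1
    linarith
  constructor
  · obtain ⟨N, hN⟩ := eventually_atTop.1 hvev
    rw [← summable_nat_add_iff N]
    set r : ℝ := Real.exp (m / 2) with hr
    have hr0 : 0 ≤ r := Real.exp_nonneg _
    have hr1 : r < 1 := Real.exp_lt_one_iff.2 hm2neg
    refine Summable.of_nonneg_of_le (fun n => hT0 _) (fun n => ?_)
      (((summable_geometric_of_lt_one hr0 hr1).mul_left (r ^ N)))
    calc T (n + N) ≤ Real.exp ((∑ i ∈ range (n + N), x i) + L (n + N)) := hTle _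
      _ ≤ Real.exp ((m / 2) * (n + N)) := Real.exp_le_exp.2 (by
          have := hN (n + N) (Nat.le_add_left _ _)
          push_cast at this ⊢
          linarith)
      _ = r ^ (n + N) := by
          rw [hr, ← Real.exp_nat_mul]
          push_cast
          ring_nf
      _ = r ^ N * r ^ n := by rw [pow_add, mul_comm]
  · have hu_bot : Tendsto (fun n : ℕ => ∑ i ∈ range n, x i) atTop atBot := by
      refine tendsto_atBot_mono' _ huev ?_
      have : Tendsto (fun n : ℕ => (n : ℝ)) atTop atTop := tendsto_natCast_atTop_atTop
      exact (tendsto_const_mul_atBot_of_neg hm2neg).2 this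
    have := (Real.tendsto_exp_atBot).comp hu_bot
    exact squeeze_zero hP0 hPle this

lemma aux_slln {Ω : Type*} [MeasurableSpace Ω] (μ : Measure Ω) [IsProbabilityMeasure μ]
    (A B : ℤ → Ω → ℝ)
    (hAmeas : ∀ t, Measurable (A t)) (hBmeas : ∀ t, Measurable (B t))
    (hiid : iIndepFun (fun t ω => (A t ω, B t ω)) μ)
    (hident : ∀ t, Measure.map (fun ω => (A t ω, B t ω)) μ
        = Measure.map (fun ω => (A 0 ω, B 0 ω)) μ)
    (f : ℝ × ℝ → ℝ) (hf : Measurable f)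
    (hint : Integrable (fun ω => f (A 0 ω, B 0 ω)) μ) (t : ℤ) :
    ∀ᵐ ω ∂μ, Tendsto
      (fun n : ℕ => (∑ i ∈ Finset.range n, f (A (t - i) ω, B (t - i) ω)) / n)
      atTop (𝓝 (∫ ω, f (A 0 ω, B 0 ω) ∂μ)) := by
  set X : ℕ → Ω → ℝ := fun i ω => f (A (t - i) ω, B (t - i) ω) with hX
  have identD : ∀ s : ℤ, IdentDistrib (fun ω => f (A s ω, B s ω))
      (fun ω => f (A 0 ω, B 0 ω)) μ μ := by
    intro s
    exact IdentDistrib.comp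
      ⟨((hAmeas s).prodMk (hBmeas s)).aemeasurable,
       ((hAmeas 0).prodMk (hBmeas 0)).aemeasurable, hident s⟩ hf
  have hident' : ∀ i : ℕ, IdentDistrib (X i) (X 0) μ μ := fun i =>
    (identD (t - i)).trans (identD (t - (0:ℕ))).symm
  have hindep : Pairwise (Function.onFun (IndepFun · · μ) X) := by
    intro i j hij
    have hne : (t - i : ℤ) ≠ (t - j : ℤ) := by
      intro hc
      apply hij
      omega
    exact (hiid.indepFun hne).comp hf hf
  have hint0 : Integrable (X 0) μ := (identD (t - (0:ℕ))).integrable_iff.2 hint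
  have := strong_law_ae_real X hint0 hindep hident'
  have heq : (μ[X 0]) = ∫ ω, f (A 0 ω, B 0 ω) ∂μ := (identD (t - (0:ℕ))).integral_eq
  rw [heq] at this
  exact this

private lemma rexp_bound (a r : ℝ) (ha : 0 ≤ a) : a ≤ Real.exp (max (Real.log a) r) := by
  rcases eq_or_lt_of_le ha with h0 | h0
  · exact le_of_lt (by rw [← h0]; exact Real.exp_pos _)
  · calc a = Real.exp (Real.log a) := (Real.exp_log h0).symm
      _ ≤ _ := Real.exp_le_exp.2 (le_max_left _ _)


lemma aux_event {Ω : Type*} [MeasurableSpace Ω] (μ : Measure Ω) [IsProbabilityMeasure μ]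
    (A B : ℤ → Ω → ℝ)
    (hAmeas : ∀ t, Measurable (A t)) (hBmeas : ∀ t, Measurable (B t))
    (hAnonneg : ∀ t ω, 0 ≤ A t ω) (hBnonneg : ∀ t ω, 0 ≤ B t ω)
    (hiid : iIndepFun (fun t ω => (A t ω, B t ω)) μ)
    (hident : ∀ t, Measure.map (fun ω => (A t ω, B t ω)) μ
        = Measure.map (fun ω => (A 0 ω, B 0 ω)) μ)
    (hlogA : Integrable (fun ω => max (Real.log (A 0 ω)) 0) μ)
    (hlogB : Integrable (fun ω => max (Real.log (B 0 ω)) 0) μ)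
    (hneg : ¬ Integrable (fun ω => Real.log (A 0 ω)) μ ∨
        ∫ ω, Real.log (A 0 ω) ∂μ < 0) (t : ℤ) :
    ∀ᵐ ω ∂μ,
      Summable (fun k : ℕ => (∏ j ∈ Finset.range k, A (t - j) ω) * B (t - k) ω) ∧
      Tendsto (fun n : ℕ => ∏ j ∈ Finset.range n, A (t - j) ω) atTop (𝓝 0) := by
  obtain ⟨M, hMint, hMneg⟩ := aux_choose_M μ (fun ω => Real.log (A 0 ω))
    (Real.measurable_log.comp (hAmeas 0)) hlogA hneg
  set f1 : ℝ × ℝ → ℝ := fun p => max (Real.log p.1) (-(M:ℝ)) with hf1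
  set f2 : ℝ × ℝ → ℝ := fun p => max (Real.log p.2) 0 with hf2
  have hf1m : Measurable f1 := (Real.measurable_log.comp measurable_fst).max measurable_const
  have hf2m : Measurable f2 := (Real.measurable_log.comp measurable_snd).max measurable_const
  have h1 := aux_slln μ A B hAmeas hBmeas hiid hident f1 hf1m hMint t
  have h2 := aux_slln μ A B hAmeas hBmeas hiid hident f2 hf2m hlogB t
  filter_upwards [h1, h2] with ω hω1 hω2
  have hx : Tendsto (fun n : ℕ =>
      (∑ i ∈ range n, max (Real.log (A (t - i) ω)) (-(M:ℝ))) / n) atTop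
      (𝓝 (∫ ω, max (Real.log (A 0 ω)) (-(M:ℝ)) ∂μ)) := hω1
  have hLt : Tendsto (fun n : ℕ =>
      (∑ i ∈ range n, max (Real.log (B (t - i) ω)) 0) / n) atTop
      (𝓝 (∫ ω, max (Real.log (B 0 ω)) 0 ∂μ)) := hω2
  refine (aux_det hMneg hx hLt
    (P := fun n => ∏ j ∈ Finset.range n, A (t - j) ω)
    (T := fun k => (∏ j ∈ Finset.range k, A (t - j) ω) * B (t - k) ω)
    (fun n => Finset.prod_nonneg fun j _ => hAnonneg _ ω) ?_
    (fun k => mul_nonneg (Finset.prod_nonneg fun j _ => hAnonneg _ ω) (hBnonneg _ ω))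
    ?_).symm.imp id id |>.symm
  · intro n
    calc (∏ j ∈ Finset.range n, A (t - j) ω)
        ≤ ∏ j ∈ Finset.range n, Real.exp (max (Real.log (A (t - j) ω)) (-(M:ℝ))) :=
          Finset.prod_le_prod (fun j _ => hAnonneg _ ω)
            (fun j _ => rexp_bound _ _ (hAnonneg _ ω))
      _ = Real.exp (∑ i ∈ range n, max (Real.log (A (t - i) ω)) (-(M:ℝ))) :=
          (Real.exp_sum _ _).symm
  · intro k
    calc (∏ j ∈ Finset.range k, A (t - j) ω) * B (t - k) ω
        ≤ Real.exp (∑ i ∈ range k, max (Real.log (A (t - i) ω)) (-(M:ℝ)))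
            * Real.exp (max (Real.log (B (t - k) ω)) 0) := by
          refine mul_le_mul ?_ (rexp_bound _ _ (hBnonneg _ ω)) (hBnonneg _ ω)
            (Real.exp_nonneg _)
          calc (∏ j ∈ Finset.range k, A (t - j) ω)
              ≤ ∏ j ∈ Finset.range k, Real.exp (max (Real.log (A (t - j) ω)) (-(M:ℝ))) :=
                Finset.prod_le_prod (fun j _ => hAnonneg _ ω)
                  (fun j _ => rexp_bound _ _ (hAnonneg _ ω))
            _ = _ := (Real.exp_sum _ _).symm
      _ = Real.exp ((∑ i ∈ range k, max (Real.log (A (t - i) ω)) (-(M:ℝ)))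
            + max (Real.log (B (t - k) ω)) 0) := (Real.exp_add _ _).symm


lemma aux_jointlaw {Ω : Type*} [MeasurableSpace Ω] (μ : Measure Ω) [IsProbabilityMeasure μ]
    (A B : ℤ → Ω → ℝ)
    (hAmeas : ∀ t, Measurable (A t)) (hBmeas : ∀ t, Measurable (B t))
    (hiid : iIndepFun (fun t ω => (A t ω, B t ω)) μ)
    (hident : ∀ t, Measure.map (fun ω => (A t ω, B t ω)) μ
        = Measure.map (fun ω => (A 0 ω, B 0 ω)) μ)
    (I : Finset ℤ) (t : ℤ) :
    Measure.map (fun ω (i : I) => (A (t + i) ω, B (t + i) ω)) μ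
      = Measure.pi (fun _ : I => Measure.map (fun ω => (A 0 ω, B 0 ω)) μ) := by
  classical
  have hFmeas : ∀ s : ℤ, Measurable (fun ω => (A s ω, B s ω)) :=
    fun s => (hAmeas s).prodMk (hBmeas s)
  have hmap : Measurable (fun ω (i : I) => (A (t + i) ω, B (t + i) ω)) :=
    measurable_pi_lambda _ fun i => hFmeas _
  refine (Measure.pi_eq fun s hs => ?_).symm
  rw [Measure.map_apply hmap (MeasurableSet.univ_pi hs)]
  -- the preimage is an intersection over the shifted index set
  set S : Finset ℤ := I.image (fun i => t + i) with hS
  have hinj : Set.InjOn (fun i => t + i) ↑I := fun a _ b _ h => by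
    have : t + a = t + b := h
    omega
  set sets : ℤ → Set (ℝ × ℝ) := fun j =>
    if h : j - t ∈ I then s ⟨j - t, h⟩ else Set.univ with hsets
  have hsets_meas : ∀ j ∈ S, MeasurableSet (sets j) := by
    intro j _
    by_cases h : j - t ∈ I
    · simpa [hsets, h] using hs ⟨j - t, h⟩
    · simp [hsets, h]
  have hpre : (fun ω (i : I) => (A (t + i) ω, B (t + i) ω)) ⁻¹' (Set.pi Set.univ s)
      = ⋂ j ∈ S, (fun ω => (A j ω, B j ω)) ⁻¹' (sets j) := by
    ext ω
    simp only [Set.mem_preimage, Set.mem_pi, Set.mem_univ, forall_true_left,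
      Set.mem_iInter, hS, Finset.mem_image]
    constructor
    · rintro h j ⟨i, hi, rfl⟩
      have : (t + i) - t ∈ I := by simpa using hi
      simp only [hsets, dif_pos this]
      have : (⟨(t + i) - t, this⟩ : I) = ⟨i, hi⟩ := by
        congr 1
        omega
      rw [this]
      exact h ⟨i, hi⟩
    · intro h i
      have := h (t + i) ⟨i, i.2, rfl⟩
      have hmem : (t + (i:ℤ)) - t ∈ I := by simpa using i.2
      simp only [hsets, dif_pos hmem] at this
      have heq : (⟨(t + (i:ℤ)) - t, hmem⟩ : I) = i :=
        Subtype.ext (show t + (i:ℤ) - t = (i:ℤ) by ring)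
      rwa [heq] at this
  rw [hpre]
  have hν : IsProbabilityMeasure (Measure.map (fun ω => (A 0 ω, B 0 ω)) μ) :=
    Measure.isProbabilityMeasure_map (hFmeas 0).aemeasurable
  have hprod := hiid.measure_inter_preimage_eq_mul (S := S)
    (sets := sets) (fun j hj => hsets_meas j hj)
  rw [hprod, hS, Finset.prod_image hinj]
  have hfac : ∀ j ∈ I, μ ((fun ω => (A (t + j) ω, B (t + j) ω)) ⁻¹' sets (t + j))
      = (Measure.map (fun ω => (A 0 ω, B 0 ω)) μ) (sets (t + j)) := by
    intro j hj
    have hm : MeasurableSet (sets (t + j)) :=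
      hsets_meas (t + j) (Finset.mem_image.2 ⟨j, hj, rfl⟩)
    rw [← hident (t + j), Measure.map_apply (hFmeas (t + j)) hm]
  rw [Finset.prod_congr rfl hfac,
    ← Finset.prod_coe_sort I (fun x => (Measure.map (fun ω => (A 0 ω, B 0 ω)) μ) (sets (t + x)))]
  refine Fintype.prod_congr _ _ fun i => ?_
  have hmem : (t + (i:ℤ)) - t ∈ I := by simpa using i.2
  have heq : (⟨(t + (i:ℤ)) - t, hmem⟩ : I) = i :=
    Subtype.ext (show t + (i:ℤ) - t = (i:ℤ) by ring)
  simp only [hsets, dif_pos hmem, heq]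

lemma aux_seqlaw {Ω : Type*} [MeasurableSpace Ω] (μ : Measure Ω) [IsProbabilityMeasure μ]
    (A B : ℤ → Ω → ℝ)
    (hAmeas : ∀ t, Measurable (A t)) (hBmeas : ∀ t, Measurable (B t))
    (hiid : iIndepFun (fun t ω => (A t ω, B t ω)) μ)
    (hident : ∀ t, Measure.map (fun ω => (A t ω, B t ω)) μ
        = Measure.map (fun ω => (A 0 ω, B 0 ω)) μ)
    (t : ℤ) :
    Measure.map (fun ω (s : ℤ) => (A (t + s) ω, B (t + s) ω)) μ
      = Measure.map (fun ω (s : ℤ) => (A s ω, B s ω)) μ := by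
  have hFmeas : ∀ s : ℤ, Measurable (fun ω => (A s ω, B s ω)) :=
    fun s => (hAmeas s).prodMk (hBmeas s)
  have hξ : ∀ u : ℤ, Measurable (fun ω (s : ℤ) => (A (u + s) ω, B (u + s) ω)) :=
    fun u => measurable_pi_lambda _ fun s => hFmeas _
  have hξ0 : Measurable (fun ω (s : ℤ) => (A s ω, B s ω)) :=
    measurable_pi_lambda _ fun s => hFmeas _
  have : IsProbabilityMeasure (Measure.map (fun ω (s : ℤ) => (A (t + s) ω, B (t + s) ω)) μ) :=
    Measure.isProbabilityMeasure_map (hξ t).aemeasurable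
  have : IsProbabilityMeasure (Measure.map (fun ω (s : ℤ) => (A s ω, B s ω)) μ) :=
    Measure.isProbabilityMeasure_map hξ0.aemeasurable
  refine ext_of_generate_finite (measurableCylinders (fun _ : ℤ => ℝ × ℝ))
    generateFrom_measurableCylinders.symm isPiSystem_measurableCylinders (fun C hC => ?_)
    (by simp)
  obtain ⟨I, S, hS, rfl⟩ := (mem_measurableCylinders _).mp hC
  have hrestrict : Measurable (Finset.restrict I (π := fun _ : ℤ => ℝ × ℝ)) :=
    measurable_pi_lambda _ fun i => measurable_pi_apply _
  have key : ∀ u : ℤ, (Measure.map (fun ω (s : ℤ) => (A (u + s) ω, B (u + s) ω)) μ)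
      (cylinder I S)
      = (Measure.pi (fun _ : I => Measure.map (fun ω => (A 0 ω, B 0 ω)) μ)) S := by
    intro u
    rw [Measure.map_apply (hξ u) (hS.cylinder I)]
    have hpre : (fun ω (s : ℤ) => (A (u + s) ω, B (u + s) ω)) ⁻¹' (cylinder I S)
        = (fun ω (i : I) => (A (u + i) ω, B (u + i) ω)) ⁻¹' S := by
      rfl
    rw [hpre, ← Measure.map_apply (measurable_pi_lambda _ fun i : I => hFmeas _) hS,
      aux_jointlaw μ A B hAmeas hBmeas hiid hident I u]
  rw [key t]
  have := key 0
  simp only [zero_add] at this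
  rw [this]


end BrandtAux

open Finset Topology in
/-- Brandt/Vervaat: for iid pairs `(A_t, B_t)` of nonnegative random variables with
`E[log⁺ A₀] < ∞`, `E[log⁺ B₀] < ∞` and `E[log A₀] < 0`, the series
`Y_t = Σ_{k≥0} A_t ⋯ A_{t−k+1} B_{t−k}` converges a.s. and defines the unique
strictly stationary causal solution of `Y_t = A_t Y_{t−1} + B_t`. -/
theorem stmt9 {Ω : Type*} [MeasurableSpace Ω] (μ : Measure Ω) [IsProbabilityMeasure μ]
    (A B : ℤ → Ω → ℝ)
    (hAmeas : ∀ t, Measurable (A t)) (hBmeas : ∀ t, Measurable (B t))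
    (hAnonneg : ∀ t ω, 0 ≤ A t ω) (hBnonneg : ∀ t ω, 0 ≤ B t ω)
    (hiid : iIndepFun (fun t ω => (A t ω, B t ω)) μ)
    (hident : ∀ t, Measure.map (fun ω => (A t ω, B t ω)) μ
        = Measure.map (fun ω => (A 0 ω, B 0 ω)) μ)
    (hlogA : Integrable (fun ω => max (Real.log (A 0 ω)) 0) μ)
    (hlogB : Integrable (fun ω => max (Real.log (B 0 ω)) 0) μ)
    (hneg : ¬ Integrable (fun ω => Real.log (A 0 ω)) μ ∨
        ∫ ω, Real.log (A 0 ω) ∂μ < 0)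
    (Y : ℤ → Ω → ℝ)
    (hY : ∀ t ω, Y t ω =
      ∑' k : ℕ, (∏ j ∈ Finset.range k, A (t - j) ω) * B (t - k) ω) :
    -- a.s. convergence of the series
    (∀ t : ℤ, ∀ᵐ ω ∂μ, Summable
      (fun k : ℕ => (∏ j ∈ Finset.range k, A (t - j) ω) * B (t - k) ω)) ∧
    -- `Y` solves the stochastic recurrence equation
    (∀ t : ℤ, ∀ᵐ ω ∂μ, Y t ω = A t ω * Y (t - 1) ω + B t ω) ∧
    -- strict stationarity
    (∀ (t : ℤ) (n : ℕ),
      Measure.map (fun ω => fun i : Fin n => Y (t + i) ω) μ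
        = Measure.map (fun ω => fun i : Fin n => Y (i : ℤ) ω) μ) ∧
    -- causality
    (∀ t : ℤ, Measurable[MeasurableSpace.comap
        (fun ω => fun s : {s : ℤ // s ≤ t} => (A s.1 ω, B s.1 ω)) inferInstance]
      (Y t)) ∧
    -- uniqueness among strictly stationary causal solutions
    (∀ Y' : ℤ → Ω → ℝ, (∀ t, Measurable (Y' t)) →
      (∀ t : ℤ, Measurable[MeasurableSpace.comap
          (fun ω => fun s : {s : ℤ // s ≤ t} => (A s.1 ω, B s.1 ω)) inferInstance]
        (Y' t)) →
      (∀ t : ℤ, ∀ᵐ ω ∂μ, Y' t ω = A t ω * Y' (t - 1) ω + B t ω) →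
      (∀ (t : ℤ) (n : ℕ),
        Measure.map (fun ω => fun i : Fin n => Y' (t + i) ω) μ
          = Measure.map (fun ω => fun i : Fin n => Y' (i : ℤ) ω) μ) →
      ∀ t : ℤ, Y' t =ᵐ[μ] Y t) := by
  classical
  have hFmeas : ∀ s : ℤ, Measurable (fun ω => (A s ω, B s ω)) :=
    fun s => (hAmeas s).prodMk (hBmeas s)
  have hEvent := fun t => aux_event μ A B hAmeas hBmeas hAnonneg hBnonneg hiid hident
    hlogA hlogB hneg t
  have part1 : ∀ t : ℤ, ∀ᵐ ω ∂μ, Summable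
      (fun k : ℕ => (∏ j ∈ Finset.range k, A (t - j) ω) * B (t - k) ω) :=
    fun t => (hEvent t).mono fun ω h => h.1
  -- measurability of terms / partial sums / products
  have hTmeas : ∀ (t : ℤ) (k : ℕ),
      Measurable (fun ω => (∏ j ∈ Finset.range k, A (t - j) ω) * B (t - k) ω) :=
    fun t k => (Finset.measurable_prod _ fun j _ => hAmeas _).mul (hBmeas _)
  have hPmeas : ∀ (t : ℤ) (n : ℕ), Measurable (fun ω => ∏ j ∈ Finset.range n, A (t - j) ω) :=
    fun t n => Finset.measurable_prod _ fun j _ => hAmeas _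
  -- Part 2 : recurrence
  have part2 : ∀ t : ℤ, ∀ᵐ ω ∂μ, Y t ω = A t ω * Y (t - 1) ω + B t ω := by
    intro t
    filter_upwards [part1 t] with ω hsum
    have hterm : ∀ k : ℕ,
        (∏ j ∈ Finset.range (k + 1), A (t - (j : ℕ)) ω) * B (t - ((k + 1 : ℕ) : ℤ)) ω
          = A t ω * ((∏ j ∈ Finset.range k, A (t - 1 - (j : ℕ)) ω) * B (t - 1 - (k : ℕ)) ω) := by
      intro k
      rw [Finset.prod_range_succ']
      have e1 : ∀ j : ℕ, t - ((j + 1 : ℕ) : ℤ) = t - 1 - (j : ℕ) := by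
        intro j; push_cast; ring
      simp only [e1, Nat.cast_zero, sub_zero]
      ring
    have h1 := hY t ω
    rw [hsum.tsum_eq_zero_add] at h1
    rw [h1, tsum_congr hterm, tsum_mul_left, ← hY (t - 1) ω]
    simp only [Finset.range_zero, Finset.prod_empty, one_mul, Nat.cast_zero, sub_zero]
    ring
  -- Part 3 : stationarity
  have hξ : ∀ u : ℤ, Measurable (fun ω (s : ℤ) => (A (u + s) ω, B (u + s) ω)) :=
    fun u => measurable_pi_lambda _ fun s => hFmeas _
  have part3 : ∀ (t : ℤ) (n : ℕ),
      Measure.map (fun ω => fun i : Fin n => Y (t + i) ω) μ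
        = Measure.map (fun ω => fun i : Fin n => Y (i : ℤ) ω) μ := by
    intro t n
    set G : (ℤ → ℝ × ℝ) → (Fin n → ℝ) := fun x i =>
      (∑' k : ℕ, ENNReal.ofReal ((∏ j ∈ Finset.range k, (x (((i : ℤ)) - (j : ℕ))).1)
        * (x (((i : ℤ)) - (k : ℕ))).2)).toReal with hG
    have hGmeas : Measurable G := by
      refine measurable_pi_lambda _ fun i => Measurable.ennreal_toReal
        (Measurable.ennreal_tsum fun k => Measurable.ennreal_ofReal ?_)
      exact (Finset.measurable_prod _ fun j _ =>
        (measurable_pi_apply _).fst).mul (measurable_pi_apply _).snd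
    have hpoint : ∀ u : ℤ, (fun ω => fun i : Fin n => Y (u + (i : ℤ)) ω)
        = fun ω => G (fun s : ℤ => (A (u + s) ω, B (u + s) ω)) := by
      intro u
      funext ω i
      rw [hY (u + (i : ℤ)) ω, aux_tsum_toReal (fun k => mul_nonneg
        (Finset.prod_nonneg fun j _ => hAnonneg _ ω) (hBnonneg _ ω))]
      simp only [hG, add_sub_assoc]
    have hmap : ∀ u : ℤ, Measure.map (fun ω => fun i : Fin n => Y (u + (i : ℤ)) ω) μ
        = Measure.map G (Measure.map (fun ω (s : ℤ) => (A (u + s) ω, B (u + s) ω)) μ) := by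
      intro u
      rw [Measure.map_map hGmeas (hξ u), hpoint u]
      rfl
    rw [hmap t]
    have h0 : (fun ω => fun i : Fin n => Y ((i : ℤ)) ω)
        = fun ω => fun i : Fin n => Y (0 + (i : ℤ)) ω := by
      funext ω i
      rw [zero_add]
    rw [h0, hmap 0, aux_seqlaw μ A B hAmeas hBmeas hiid hident t,
      ← aux_seqlaw μ A B hAmeas hBmeas hiid hident 0]
  -- Part 4 : causality
  have part4 : ∀ t : ℤ, Measurable[MeasurableSpace.comap
      (fun ω => fun s : {s : ℤ // s ≤ t} => (A s.1 ω, B s.1 ω)) inferInstance] (Y t) := by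
    intro t
    set mt := MeasurableSpace.comap
      (fun ω => fun s : {s : ℤ // s ≤ t} => (A s.1 ω, B s.1 ω)) inferInstance with hmt
    have hbase : Measurable[mt] (fun ω => fun s : {s : ℤ // s ≤ t} => (A s.1 ω, B s.1 ω)) :=
      aux_meas_comap _
    have hA' : ∀ s : ℤ, s ≤ t → Measurable[mt] (A s) := fun s hs =>
      measurable_fst.comp ((measurable_pi_apply (⟨s, hs⟩ : {s : ℤ // s ≤ t})).comp hbase)
    have hB' : ∀ s : ℤ, s ≤ t → Measurable[mt] (B s) := fun s hs =>
      measurable_snd.comp ((measurable_pi_apply (⟨s, hs⟩ : {s : ℤ // s ≤ t})).comp hbase)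
    have hYrep : Y t = fun ω => (∑' k : ℕ, ENNReal.ofReal
        ((∏ j ∈ Finset.range k, A (t - j) ω) * B (t - k) ω)).toReal := by
      funext ω
      rw [hY t ω]
      exact aux_tsum_toReal fun k => mul_nonneg
        (Finset.prod_nonneg fun j _ => hAnonneg _ ω) (hBnonneg _ ω)
    rw [hYrep]
    exact Measurable.ennreal_toReal (Measurable.ennreal_tsum fun k =>
      ((Finset.measurable_prod _ fun j _ => hA' _ (by omega)).mul
        (hB' _ (by omega))).ennreal_ofReal)
  refine ⟨part1, part2, part3, part4, ?_⟩
  -- Part 5 : uniqueness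
  intro Y' hY'meas _hY'causal hY'rec hY'stat t
  set T : ℕ → Ω → ℝ := fun k ω => (∏ j ∈ Finset.range k, A (t - j) ω) * B (t - k) ω with hT
  set S : ℕ → Ω → ℝ := fun n ω => ∑ k ∈ Finset.range n, T k ω with hS
  set P : ℕ → Ω → ℝ := fun n ω => ∏ j ∈ Finset.range n, A (t - j) ω with hP
  have hrecAll : ∀ᵐ ω ∂μ, ∀ s : ℤ, Y' s ω = A s ω * Y' (s - 1) ω + B s ω :=
    (ae_all_iff).2 hY'rec
  have hiter : ∀ ω, (∀ s : ℤ, Y' s ω = A s ω * Y' (s - 1) ω + B s ω) → ∀ n : ℕ,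
      Y' t ω = S n ω + P n ω * Y' (t - n) ω := by
    intro ω hω n
    induction n with
    | zero => simp [hS, hP, hT]
    | succ n ih =>
      have e1 : t - ((n + 1 : ℕ) : ℤ) = t - (n : ℕ) - 1 := by push_cast; ring
      simp only [hS, hP, hT] at ih ⊢
      rw [Finset.sum_range_succ, Finset.prod_range_succ, e1, ih, hω (t - (n : ℤ))]
      ring
  have hlawY' : ∀ s : ℤ, Measure.map (Y' s) μ = Measure.map (Y' 0) μ := by
    intro s
    have hm1 : Measurable (fun g : Fin 1 → ℝ => g 0) := measurable_pi_apply 0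
    have key : ∀ u : ℤ, Measure.map (fun g : Fin 1 → ℝ => g 0)
        (Measure.map (fun ω => fun i : Fin 1 => Y' (u + i) ω) μ)
          = Measure.map (Y' u) μ := by
      intro u
      rw [Measure.map_map hm1 (measurable_pi_lambda _ fun i => hY'meas _)]
      have hfun : ((fun g : Fin 1 → ℝ => g 0)
          ∘ (fun ω => fun i : Fin 1 => Y' (u + i) ω)) = Y' u := by
        funext ω
        simp
      rw [hfun]
    have key0 : Measure.map (fun g : Fin 1 → ℝ => g 0)
        (Measure.map (fun ω => fun i : Fin 1 => Y' ((i : ℤ)) ω) μ)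
          = Measure.map (Y' 0) μ := by
      rw [Measure.map_map hm1 (measurable_pi_lambda _ fun i => hY'meas _)]
      have hfun : ((fun g : Fin 1 → ℝ => g 0)
          ∘ (fun ω => fun i : Fin 1 => Y' ((i : ℤ)) ω)) = Y' 0 := by
        funext ω
        simp
      rw [hfun]
    rw [← key s, hY'stat s 1, key0]
  have htail : Tendsto (fun K : ℕ => μ {ω | (K : ℝ) ≤ |Y' 0 ω|}) atTop (𝓝 0) := by
    have hmeasK : ∀ K : ℕ, MeasurableSet {ω | (K : ℝ) ≤ |Y' 0 ω|} :=
      fun K => measurableSet_le measurable_const (hY'meas 0).abs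
    have hanti : Antitone (fun K : ℕ => {ω | (K : ℝ) ≤ |Y' 0 ω|}) := by
      intro K K' hKK' ω hω
      simp only [Set.mem_setOf_eq] at hω ⊢
      have hc : (K : ℝ) ≤ (K' : ℝ) := by exact_mod_cast hKK'
      linarith
    have hempty : (⋂ K : ℕ, {ω | (K : ℝ) ≤ |Y' 0 ω|}) = (∅ : Set Ω) := by
      ext ω
      simp only [Set.mem_iInter, Set.mem_setOf_eq, Set.mem_empty_iff_false, iff_false,
        not_forall, not_le]
      obtain ⟨K, hK⟩ := exists_nat_gt |Y' 0 ω|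
      exact ⟨K, hK⟩
    have h := tendsto_measure_iInter_atTop (fun K => (hmeasK K).nullMeasurableSet) hanti
      ⟨0, measure_ne_top μ _⟩
    rw [hempty, measure_empty] at h
    exact h
  have hlawtail : ∀ (s : ℤ) (K : ℕ),
      μ {ω | (K : ℝ) ≤ |Y' s ω|} = μ {ω | (K : ℝ) ≤ |Y' 0 ω|} := by
    intro s K
    have hsm : MeasurableSet {y : ℝ | (K : ℝ) ≤ |y|} :=
      measurableSet_le measurable_const (measurable_id.abs)
    calc μ {ω | (K : ℝ) ≤ |Y' s ω|}
        = (Measure.map (Y' s) μ) {y | (K : ℝ) ≤ |y|} := by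
          rw [Measure.map_apply (hY'meas s) hsm]; rfl
      _ = (Measure.map (Y' 0) μ) {y | (K : ℝ) ≤ |y|} := by rw [hlawY' s]
      _ = μ {ω | (K : ℝ) ≤ |Y' 0 ω|} := by rw [Measure.map_apply (hY'meas 0) hsm]; rfl
  have hPtend : ∀ᵐ ω ∂μ, Tendsto (fun n => P n ω) atTop (𝓝 0) :=
    (hEvent t).mono fun ω h => h.2
  have hPinm : TendstoInMeasure μ (fun n ω => P n ω) atTop (fun _ => (0:ℝ)) :=
    tendstoInMeasure_of_tendsto_ae (fun n => (hPmeas t n).aestronglyMeasurable) hPtend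
  have hRinm : TendstoInMeasure μ (fun n ω => Y' t ω - S n ω) atTop (fun _ => (0:ℝ)) := by
    rw [tendstoInMeasure_iff_dist]
    intro ε hε
    rw [ENNReal.tendsto_atTop_zero]
    intro δ hδ
    have hδ2 : (0 : ENNReal) < δ / 2 := ENNReal.half_pos hδ.ne'
    obtain ⟨K₀, hK₀⟩ := eventually_atTop.1 (htail.eventually (gt_mem_nhds hδ2))
    set K : ℕ := max K₀ 1 with hK
    have hKpos : (0 : ℝ) < K := by
      have : (1 : ℕ) ≤ K := le_max_right _ _
      exact_mod_cast Nat.lt_of_lt_of_le Nat.zero_lt_one this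
    have hKbound : μ {ω | (K : ℝ) ≤ |Y' 0 ω|} ≤ δ / 2 := (hK₀ K (le_max_left _ _)).le
    have hc : 0 < ε / (K : ℝ) := div_pos hε hKpos
    obtain ⟨N, hN⟩ := eventually_atTop.1 ((tendstoInMeasure_iff_dist.1 hPinm (ε / K) hc).eventually (gt_mem_nhds hδ2))
    refine ⟨N, fun n hn => ?_⟩
    have hsub : ∀ᵐ x ∂μ, x ∈ {x | ε ≤ dist (Y' t x - S n x) ((fun _ => (0:ℝ)) x)}
        → x ∈ (({x | ε / (K:ℝ) ≤ dist (P n x) ((fun _ => (0:ℝ)) x)}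
          ∪ {x | (K : ℝ) ≤ |Y' (t - n) x|} : Set Ω)) := by
      filter_upwards [hrecAll] with x hx
      intro hmem
      by_contra hcon
      simp only [Set.mem_union, Set.mem_setOf_eq, not_or, not_le] at hcon
      obtain ⟨h1, h2⟩ := hcon
      rw [Real.dist_eq, sub_zero] at h1
      have hPn : 0 ≤ P n x := Finset.prod_nonneg fun j _ => hAnonneg _ x
      rw [abs_of_nonneg hPn] at h1
      have hmem' : ε ≤ |Y' t x - S n x| := by
        simpa [Real.dist_eq] using hmem
      have hRid : Y' t x - S n x = P n x * Y' (t - n) x := by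
        have := hiter x hx n
        linarith
      rw [hRid, abs_mul, abs_of_nonneg hPn] at hmem'
      have hlt := mul_lt_mul'' h1 h2 hPn (abs_nonneg _)
      rw [div_mul_cancel₀ ε (ne_of_gt hKpos)] at hlt
      linarith
    calc μ {x | ε ≤ dist (Y' t x - S n x) ((fun _ => (0:ℝ)) x)}
        ≤ μ (({x | ε / (K:ℝ) ≤ dist (P n x) ((fun _ => (0:ℝ)) x)}
            ∪ {x | (K : ℝ) ≤ |Y' (t - n) x|} : Set Ω)) := measure_mono_ae hsub
      _ ≤ μ {x | ε / (K:ℝ) ≤ dist (P n x) ((fun _ => (0:ℝ)) x)}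
            + μ {x | (K : ℝ) ≤ |Y' (t - n) x|} := measure_union_le _ _
      _ ≤ δ / 2 + δ / 2 := by
          refine add_le_add (hN n hn).le ?_
          rw [hlawtail (t - n) K]
          exact hKbound
      _ = δ := ENNReal.add_halves δ
  obtain ⟨ns, hns, hsub2⟩ := hRinm.exists_seq_tendsto_ae
  have hStend : ∀ᵐ ω ∂μ, Tendsto (fun n => S n ω) atTop (𝓝 (Y t ω)) := by
    filter_upwards [part1 t] with ω hsum
    have h := hsum.hasSum.tendsto_sum_nat
    rw [← hY t ω] at h
    exact h
  filter_upwards [hsub2, hStend] with ω h1 h2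
  have h3 : Tendsto (fun i => Y' t ω - S (ns i) ω) atTop (𝓝 (Y' t ω - Y t ω)) :=
    (tendsto_const_nhds.sub h2).comp hns.tendsto_atTop
  have h4 := tendsto_nhds_unique h3 h1
  have h5 : Y' t ω - Y t ω = 0 := h4
  linarith
end
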